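/- arXiv:2301.07056 — 5 statements merged into one kernel-verified Lean document; each statement's English description precedes it below -/
import Mathlib

section
/- Let X = {P_1,...,P_r} be distinct points of P^n_k with dual linear forms L_1,...,L_r and socle degree s. Fix an integer u ≥ 1 and nonzero scalars α_1,...,α_r ∈ k^*, and set F_j = (1/(j+u)!) Σ_{i=1}^r α_i L_i^{j+u} for j ≥ 1. Then for all integers w ≥ 1, all i ∈ {1,...,r}, and all t ≥ max{s, s+w−u}, there exists a homogeneous form β ∈ R of degree t+u−w such that L_i^w = β ∘ F_t. -/
open MvPolynomial
open scoped Classical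

noncomputable section

variable {k : Type} [Field k]

/-- Apolarity action: `apol f F = f(∂/∂y) F`, defined on monomials by
`x^α ∘ y^β = (β!/(β-α)!) y^(β-α)` if `α ≤ β` and `0` otherwise. -/
def apol {n : ℕ} (f F : MvPolynomial (Fin n) k) : MvPolynomial (Fin n) k :=
  (AddMonoidAlgebra.coeff f).sum fun α c => (AddMonoidAlgebra.coeff F).sum fun β b =>
    if α ≤ β then
      MvPolynomial.monomial (β - α)
        (c * b * (β.prod fun i m => ((m.descFactorial (α i) : k))))
    else 0

/-- The linear form `a₀ y₀ + ⋯ + aₙ yₙ` associated to a point with coordinates `a`. -/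
def dualLin {n : ℕ} (a : Fin n → k) : MvPolynomial (Fin n) k :=
  ∑ j, MvPolynomial.C (a j) * MvPolynomial.X j

/-- Macaulay inverse system of a set of polynomials. -/
def perp {n : ℕ} (S : Set (MvPolynomial (Fin n) k)) : Set (MvPolynomial (Fin n) k) :=
  {F | ∀ g ∈ S, apol g F = 0}

/-- The `R`-submodule of `Γ` generated by `S` (as the `k`-span of the apolarity orbit). -/
def Rspan {n : ℕ} (S : Set (MvPolynomial (Fin n) k)) : Submodule k (MvPolynomial (Fin n) k) :=
  Submodule.span k {G | ∃ g, ∃ F ∈ S, G = apol g F}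

/-- The homogeneous vanishing ideal of a family of points (given by affine representatives). -/
def projIdeal {n r : ℕ} (a : Fin r → Fin n → k) : Ideal (MvPolynomial (Fin n) k) :=
  ⨅ i, ⨅ t : k, RingHom.ker (MvPolynomial.eval (t • a i))

/-- Hilbert function of `R/I`: `dim R_j − dim I_j`. -/
def HF {n : ℕ} (I : Ideal (MvPolynomial (Fin n) k)) (j : ℕ) : ℕ :=
  Module.finrank k (homogeneousSubmodule (Fin n) k j)
    - Module.finrank k
        (Submodule.restrictScalars k I ⊓ homogeneousSubmodule (Fin n) k j : Submodule k _)

/-- `s` is the socle degree: least integer with `HF I t = r` for all `t ≥ s`. -/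
def IsSocleDegree {n : ℕ} (I : Ideal (MvPolynomial (Fin n) k)) (r s : ℕ) : Prop :=
  (∀ t, s ≤ t → HF I t = r) ∧ ∀ s', (∀ t, s' ≤ t → HF I t = r) → s ≤ s'

/-- The affine representatives define distinct points of projective space. -/
def ProjDistinct {n r : ℕ} (a : Fin r → Fin n → k) : Prop :=
  (∀ i, a i ≠ 0) ∧ ∀ i j, i ≠ j → ∀ c : k, a i ≠ c • a j

/-- G-admissibility (with `F 0` playing the role of `F₁`). -/
def GAdmissible {n : ℕ} (z : MvPolynomial (Fin n) k) (F : ℕ → MvPolynomial (Fin n) k) : Prop :=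
  apol z (F 0) = 0 ∧ (∀ l, apol z (F (l + 1)) = F l) ∧
  ∀ l, (fun g => apol g (F (l + 1))) '' {g | ∀ G ∈ (Rspan {F l} : Submodule k (MvPolynomial (Fin n) k)), apol g G = 0}
      = ((Rspan {F 0} : Submodule k (MvPolynomial (Fin n) k)) : Set (MvPolynomial (Fin n) k))

/-- The family `F_t = (1/(t+u)!) Σ αᵢ Lᵢ^{t+u}`. -/
def famF {n r : ℕ} (a : Fin r → Fin n → k) (α : Fin r → k) (u t : ℕ) :
    MvPolynomial (Fin n) k :=
  (((t + u).factorial : k))⁻¹ • ∑ i, MvPolynomial.C (α i) * dualLin (a i) ^ (t + u)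

/-- `X` is arithmetically Gorenstein, tested with the linear nonzerodivisor `z`:
the inverse system of the Artinian reduction `I(X)+(z)` is cyclic. -/
def IsArithGorAt {n r : ℕ} (a : Fin r → Fin n → k) (z : MvPolynomial (Fin n) k) : Prop :=
  ∃ F, perp ((projIdeal a ⊔ Ideal.span {z} : Ideal _) : Set (MvPolynomial (Fin n) k))
    = ((Rspan {F} : Submodule k (MvPolynomial (Fin n) k)) : Set (MvPolynomial (Fin n) k))

/-- `X` is arithmetically Gorenstein (for some linear form not vanishing at any point). -/
def IsArithGor {n r : ℕ} (a : Fin r → Fin n → k) : Prop :=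
  ∃ b : Fin n → k, (∀ i, (∑ j, b j * a i j) ≠ 0) ∧ IsArithGorAt a (dualLin b)



namespace Stmt5Aux

variable {n : ℕ}

lemma apol_monomial_left (γ : Fin n →₀ ℕ) (c : k) (F : MvPolynomial (Fin n) k) :
    apol (monomial γ c) F = (AddMonoidAlgebra.coeff F).sum fun β b =>
      if γ ≤ β then monomial (β - γ)
        (c * b * (β.prod fun i m => ((m.descFactorial (γ i) : k)))) else 0 := by
  unfold apol
  rw [← single_eq_monomial, AddMonoidAlgebra.coeff_single]
  refine Finsupp.sum_single_index ?_
  simp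

lemma apol_monomial_monomial (γ β : Fin n →₀ ℕ) (c b : k) :
    apol (monomial γ c) (monomial β b) =
      if γ ≤ β then monomial (β - γ)
        (c * b * (β.prod fun i m => ((m.descFactorial (γ i) : k)))) else 0 := by
  rw [apol_monomial_left, ← single_eq_monomial, AddMonoidAlgebra.coeff_single]
  refine Finsupp.sum_single_index ?_
  split <;> simp

lemma apol_add_right (f F G : MvPolynomial (Fin n) k) :
    apol f (F + G) = apol f F + apol f G := by
  unfold apol
  rw [AddMonoidAlgebra.coeff_add, ← Finsupp.sum_add]
  refine Finsupp.sum_congr fun γ _ => ?_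
  refine Finsupp.sum_add_index' (fun β => ?_) (fun β b₁ b₂ => ?_)
  · split <;> simp
  · split <;> simp [mul_add, add_mul]

lemma apol_smul_right (f : MvPolynomial (Fin n) k) (e : k) (F : MvPolynomial (Fin n) k) :
    apol f (e • F) = e • apol f F := by
  unfold apol
  rw [AddMonoidAlgebra.coeff_smul, Finsupp.smul_sum]
  refine Finsupp.sum_congr fun γ _ => ?_
  rw [Finsupp.sum_smul_index' (fun β => by split <;> simp), Finsupp.smul_sum]
  refine Finsupp.sum_congr fun β _ => ?_
  split
  · rw [smul_monomial]
    congr 1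
    simp only [smul_eq_mul]
    ring
  · simp

lemma apol_add_left (f g F : MvPolynomial (Fin n) k) :
    apol (f + g) F = apol f F + apol g F := by
  unfold apol
  rw [AddMonoidAlgebra.coeff_add]
  refine Finsupp.sum_add_index' (fun γ => ?_) (fun γ c₁ c₂ => ?_)
  · simp
  · rw [← Finsupp.sum_add]
    refine Finsupp.sum_congr fun β _ => ?_
    split <;> simp [add_mul, mul_add]

def apolAddL (F : MvPolynomial (Fin n) k) : MvPolynomial (Fin n) k →+ MvPolynomial (Fin n) k :=
  AddMonoidHom.mk' (fun f => apol f F) (fun f g => apol_add_left f g F)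

def apolAddR (f : MvPolynomial (Fin n) k) : MvPolynomial (Fin n) k →+ MvPolynomial (Fin n) k :=
  AddMonoidHom.mk' (fun F => apol f F) (fun F G => apol_add_right f F G)

lemma apol_sum_left {ι : Type*} (s : Finset ι) (f : ι → MvPolynomial (Fin n) k)
    (F : MvPolynomial (Fin n) k) :
    apol (∑ i ∈ s, f i) F = ∑ i ∈ s, apol (f i) F :=
  map_sum (apolAddL F) f s

lemma apol_sum_right {ι : Type*} (f : MvPolynomial (Fin n) k) (s : Finset ι)
    (G : ι → MvPolynomial (Fin n) k) :
    apol f (∑ i ∈ s, G i) = ∑ i ∈ s, apol f (G i) :=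
  map_sum (apolAddR f) G s

lemma apol_C (c : k) (F : MvPolynomial (Fin n) k) : apol (C c) F = c • F := by
  rw [C_apply, apol_monomial_left]
  conv_rhs => rw [← AddMonoidAlgebra.ofCoeff_coeff F, ← Finsupp.sum_single (AddMonoidAlgebra.coeff F),
    AddMonoidAlgebra.ofCoeff_finsuppSum, Finsupp.smul_sum]
  refine Finsupp.sum_congr fun β _ => ?_
  rw [if_pos (zero_le (a := β)), AddMonoidAlgebra.ofCoeff_single, single_eq_monomial, smul_monomial]
  simp [Finsupp.prod, Nat.descFactorial_zero]

lemma apol_X_mul (j : Fin n) (g F : MvPolynomial (Fin n) k) :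
    apol (X j * g) F = pderiv j (apol g F) := by
  induction g using MvPolynomial.induction_on' with
  | add g1 g2 ih1 ih2 => rw [mul_add, apol_add_left, apol_add_left, ih1, ih2, map_add]
  | monomial γ c =>
    induction F using MvPolynomial.induction_on' with
    | add F1 F2 ih1 ih2 => rw [apol_add_right, apol_add_right, ih1, ih2, map_add]
    | monomial β b =>
      show apol (monomial (Finsupp.single j 1) 1 * monomial γ c) _ = _
      rw [monomial_mul, one_mul, apol_monomial_monomial, apol_monomial_monomial]
      by_cases h1 : γ ≤ β
      · rw [if_pos h1]
        by_cases h2 : Finsupp.single j 1 + γ ≤ β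
        · rw [if_pos h2, pderiv_monomial]
          have hj1 : γ j + 1 ≤ β j := by
            have h := Finsupp.le_def.mp h2 j
            rw [Finsupp.add_apply, Finsupp.single_apply, if_pos rfl] at h
            omega
          have hsub : β - (Finsupp.single j 1 + γ) = β - γ - Finsupp.single j 1 := by
            ext i
            simp only [Finsupp.tsub_apply, Finsupp.add_apply, Finsupp.single_apply]
            split <;> omega
          rw [hsub]
          congr 1
          have hjs : j ∈ β.support := by
            rw [Finsupp.mem_support_iff]; omega
          rw [Finsupp.prod, Finsupp.prod, ← Finset.mul_prod_erase _ _ hjs,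
            ← Finset.mul_prod_erase _ _ hjs]
          have h3 : ∀ i ∈ β.support.erase j,
              (((β i).descFactorial ((Finsupp.single j 1 + γ : Fin n →₀ ℕ) i) : k))
                = ((β i).descFactorial (γ i) : k) := by
            intro i hi
            have hij : i ≠ j := Finset.ne_of_mem_erase hi
            rw [Finsupp.add_apply, Finsupp.single_apply, if_neg (Ne.symm hij), zero_add]
          rw [Finset.prod_congr rfl h3]
          have h4 : (Finsupp.single j 1 + γ : Fin n →₀ ℕ) j = γ j + 1 := by
            rw [Finsupp.add_apply, Finsupp.single_apply, if_pos rfl]; omega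
          have h5 : ((β j).descFactorial (γ j + 1) : k)
              = (((β j - γ j : ℕ) : k)) * ((β j).descFactorial (γ j) : k) := by
            rw [Nat.descFactorial_succ]; push_cast; ring
          rw [h4, h5, Finsupp.tsub_apply]
          ring
        · rw [if_neg h2, pderiv_monomial]
          have hβj : β j = γ j := by
            by_contra hne
            apply h2
            rw [Finsupp.le_def]
            intro i
            have h := Finsupp.le_def.mp h1 i
            rw [Finsupp.add_apply, Finsupp.single_apply]
            rcases eq_or_ne j i with rfl | hij
            · rw [if_pos rfl]
              omega
            · rw [if_neg hij, zero_add]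
              exact h
          have : (β - γ) j = 0 := by rw [Finsupp.tsub_apply]; omega
          rw [this]
          simp
      · rw [if_neg h1, if_neg (fun h2 => h1 (le_trans (le_add_self) h2))]
        simp

lemma pderiv_dualLin (a : Fin n → k) (j : Fin n) : pderiv j (dualLin a) = C (a j) := by
  unfold dualLin
  rw [map_sum, Finset.sum_eq_single j]
  · rw [pderiv_C_mul, pderiv_X_self, mul_one]
  · intro l _ hl
    rw [pderiv_C_mul, pderiv_X_of_ne hl, mul_zero]
  · intro h
    exact absurd (Finset.mem_univ j) h

lemma degree_eq_sum_univ (d : Fin n →₀ ℕ) : d.degree = ∑ i, d i :=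
  Finset.sum_subset (Finset.subset_univ _)
    (fun i _ hi => Finsupp.notMem_support_iff.mp hi)

lemma apol_monomial_linpow (a : Fin n → k) (m : ℕ) (N : ℕ) :
    ∀ (γ : Fin n →₀ ℕ), γ.degree = N → ∀ c : k,
      apol (monomial γ c) (dualLin a ^ m)
        = ((m.descFactorial N : k) * c * ∏ i, a i ^ γ i) • dualLin a ^ (m - N) := by
  induction N with
  | zero =>
    intro γ hγ c
    have hγ0 : γ = 0 := by rwa [Finsupp.degree_eq_zero_iff] at hγ
    subst hγ0
    rw [← C_apply, apol_C]
    simp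
  | succ N ih =>
    intro γ hγ c
    have hne : γ ≠ 0 := by
      intro h
      rw [h, map_zero] at hγ
      omega
    obtain ⟨j, hj⟩ : ∃ j, γ j ≠ 0 := by
      by_contra h
      push_neg at h
      exact hne (Finsupp.ext fun i => h i)
    set γ' : Fin n →₀ ℕ := γ - Finsupp.single j 1 with hγ'def
    have hγγ : γ = Finsupp.single j 1 + γ' := by
      ext i
      rw [Finsupp.add_apply, hγ'def, Finsupp.tsub_apply]
      rcases eq_or_ne j i with rfl | hji
      · simp only [Finsupp.single_eq_same]
        omega
      · simp only [Finsupp.single_eq_of_ne' hji]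
        omega
    have hsum1 : (∑ i, (Finsupp.single j 1 : Fin n →₀ ℕ) i) = 1 := by
      rw [Finset.sum_eq_single j]
      · simp
      · intro l _ hl; rw [Finsupp.single_apply, if_neg (Ne.symm hl)]
      · intro h; exact absurd (Finset.mem_univ j) h
    have hd : γ'.degree = N := by
      have h1 : γ.degree = ∑ i, γ i := degree_eq_sum_univ γ
      have h2 : γ'.degree = ∑ i, γ' i := degree_eq_sum_univ γ'
      have h3 : (∑ i, γ i) = (∑ i, (Finsupp.single j 1 : Fin n →₀ ℕ) i) + ∑ i, γ' i := by
        rw [← Finset.sum_add_distrib]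
        refine Finset.sum_congr rfl fun i _ => ?_
        conv_lhs => rw [hγγ]
        rw [Finsupp.add_apply]
      rw [hsum1] at h3
      omega
    have hmono : monomial γ c = X j * monomial γ' c := by
      show _ = monomial (Finsupp.single j 1) 1 * monomial γ' c
      rw [monomial_mul, one_mul, ← hγγ]
    rw [hmono, apol_X_mul, ih γ' hd c, Derivation.map_smul, pderiv_pow, pderiv_dualLin]
    have e1 : m - N - 1 = m - (N + 1) := by omega
    have e2 : ((m.descFactorial (N + 1) : ℕ) : k)
        = ((m - N : ℕ) : k) * ((m.descFactorial N : ℕ) : k) := by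
      rw [Nat.descFactorial_succ]; push_cast; ring
    have e3 : (∏ i, a i ^ γ i) = a j * ∏ i, a i ^ γ' i := by
      conv_lhs => rw [hγγ]
      have : ∀ i, a i ^ ((Finsupp.single j 1 + γ' : Fin n →₀ ℕ) i)
          = a i ^ ((Finsupp.single j 1 : Fin n →₀ ℕ) i) * a i ^ γ' i := by
        intro i; rw [Finsupp.add_apply, pow_add]
      rw [Finset.prod_congr rfl fun i _ => this i, Finset.prod_mul_distrib]
      congr 1
      rw [Finset.prod_eq_single j]
      · simp
      · intro l _ hl; rw [Finsupp.single_apply, if_neg (Ne.symm hl), pow_zero]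
      · intro h; exact absurd (Finset.mem_univ j) h
    rw [e1]
    have e4 : ((m - N : ℕ) : MvPolynomial (Fin n) k) * dualLin a ^ (m - (N + 1)) * C (a j)
        = (((m - N : ℕ) : k) * a j) • dualLin a ^ (m - (N + 1)) := by
      rw [smul_eq_C_mul, map_mul, map_natCast]
      ring
    rw [e4, smul_smul]
    congr 1
    rw [e2, e3]
    ring

lemma apol_isHomogeneous_linpow (a : Fin n → k) {β : MvPolynomial (Fin n) k} {D : ℕ}
    (hβ : β.IsHomogeneous D) (m : ℕ) :
    apol β (dualLin a ^ m) = ((m.descFactorial D : k) * eval a β) • dualLin a ^ (m - D) := by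
  conv_lhs => rw [as_sum β]
  rw [apol_sum_left, eval_eq', Finset.mul_sum, Finset.sum_smul]
  refine Finset.sum_congr rfl fun d hd => ?_
  have hdeg : d.degree = D := by
    rw [Finsupp.degree_eq_weight_one]
    exact hβ (mem_support_iff.mp hd)
  rw [apol_monomial_linpow a m D d hdeg (coeff d β)]
  rw [mul_assoc]

lemma eval_smul_of_isHomogeneous {D : ℕ} {f : MvPolynomial (Fin n) k}
    (hf : f.IsHomogeneous D) (t : k) (x : Fin n → k) :
    eval (t • x) f = t ^ D * eval x f := by
  rw [eval_eq', eval_eq', Finset.mul_sum]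
  refine Finset.sum_congr rfl fun d hd => ?_
  have hdeg : d.degree = D := by
    rw [Finsupp.degree_eq_weight_one]
    exact hf (mem_support_iff.mp hd)
  have h1 : (∏ i, (t • x) i ^ d i) = (∏ i, t ^ d i) * ∏ i, x i ^ d i := by
    rw [← Finset.prod_mul_distrib]
    exact Finset.prod_congr rfl fun i _ => by rw [Pi.smul_apply, smul_eq_mul, mul_pow]
  have h2 : (∏ i, t ^ d i) = t ^ D := by
    rw [Finset.prod_pow_eq_pow_sum, ← degree_eq_sum_univ, hdeg]
  rw [h1, h2]
  ring

def evalLM (x : Fin n → k) : MvPolynomial (Fin n) k →ₗ[k] k where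
  toFun := eval x
  map_add' p q := map_add _ p q
  map_smul' c p := by simp [smul_eval]

lemma exists_homog_eval {r : ℕ} (a : Fin r → Fin n → k) {D : ℕ}
    (hHF : HF (projIdeal a) D = r) (v : Fin r → k) :
    ∃ β : MvPolynomial (Fin n) k, β.IsHomogeneous D ∧ ∀ j, eval (a j) β = v j := by
  set V := homogeneousSubmodule (Fin n) k D with hV
  haveI : FiniteDimensional k V := by
    refine Submodule.finiteDimensional_of_le (S₂ := restrictTotalDegree (Fin n) k D) ?_
    intro p hp
    rw [mem_restrictTotalDegree]
    exact IsHomogeneous.totalDegree_le hp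
  set E : V →ₗ[k] (Fin r → k) := LinearMap.pi fun j => (evalLM (a j)).comp V.subtype with hE
  have hmem : ∀ (p : MvPolynomial (Fin n) k), p ∈ projIdeal a ↔
      ∀ (i : Fin r) (t : k), eval (t • a i) p = 0 := by
    intro p
    simp only [projIdeal, Ideal.mem_iInf, RingHom.mem_ker]
  have hker : ∀ f : V, E f = 0 ↔ (f : MvPolynomial (Fin n) k) ∈ projIdeal a := by
    intro f
    constructor
    · intro h
      rw [hmem]
      intro i t
      rw [eval_smul_of_isHomogeneous f.2 t (a i)]
      have : eval (a i) (f : MvPolynomial (Fin n) k) = 0 := congrFun h i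
      rw [this, mul_zero]
    · intro h
      funext j
      have := (hmem _).mp h j 1
      rw [one_smul] at this
      exact this
  have hmap : (LinearMap.ker E).map V.subtype
      = Submodule.restrictScalars k (projIdeal a) ⊓ V := by
    ext p
    simp only [Submodule.mem_map, LinearMap.mem_ker, Submodule.mem_inf,
      Submodule.restrictScalars_mem]
    constructor
    · rintro ⟨f, hf, rfl⟩
      exact ⟨(hker f).mp hf, f.2⟩
    · rintro ⟨hI, hVp⟩
      exact ⟨⟨p, hVp⟩, (hker _).mpr hI, rfl⟩
  have h1 : Module.finrank k (LinearMap.ker E)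
      = Module.finrank k (Submodule.restrictScalars k (projIdeal a) ⊓ V : Submodule k _) := by
    rw [← hmap, Submodule.finrank_map_subtype_eq]
  have h2 : Module.finrank k (LinearMap.range E) + Module.finrank k (LinearMap.ker E)
      = Module.finrank k V := LinearMap.finrank_range_add_finrank_ker E
  have hHF' : Module.finrank k V
      - Module.finrank k (Submodule.restrictScalars k (projIdeal a) ⊓ V : Submodule k _)
      = r := hHF
  have h4 : Module.finrank k (LinearMap.range E) = r := by omega
  have h5 : LinearMap.range E = ⊤ := by
    apply Submodule.eq_top_of_finrank_eq
    rw [h4, Module.finrank_fin_fun]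
  obtain ⟨f, hf⟩ := LinearMap.range_eq_top.mp h5 v
  exact ⟨f.1, f.2, fun j => congrFun hf j⟩

end Stmt5Aux

/-- every power `L_i^w` can be recovered as `β ∘ F_t` from the power sums
`F_t = (1/(t+u)!) Σ α_i L_i^{t+u}`, for suitable homogeneous `β` of degree `t+u−w`. -/
theorem stmt5 [CharZero k] [IsAlgClosed k] (n r s u : ℕ) (hu : 1 ≤ u)
    (a : Fin r → Fin (n + 1) → k) (ha : ProjDistinct a)
    (hs : IsSocleDegree (projIdeal a) r s)
    (α : Fin r → k) (hα : ∀ i, α i ≠ 0)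
    (w : ℕ) (hw : 1 ≤ w) (i : Fin r) (t : ℕ) (ht : max s (s + w - u) ≤ t) :
    ∃ β : MvPolynomial (Fin (n + 1)) k, β.IsHomogeneous (t + u - w) ∧
      dualLin (a i) ^ w = apol β (famF a α u t) := by
  rw [max_le_iff] at ht
  obtain ⟨ht1, ht2⟩ := ht
  have hwtu : w ≤ t + u := by omega
  have hsD : s ≤ t + u - w := by omega
  have hHF := hs.1 (t + u - w) hsD
  obtain ⟨β, hβ, hev⟩ := Stmt5Aux.exists_homog_eval a hHF
      (fun j => if j = i then (w.factorial : k) * (α i)⁻¹ else 0)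
  refine ⟨β, hβ, ?_⟩
  simp only [famF]
  rw [Stmt5Aux.apol_smul_right, Stmt5Aux.apol_sum_right]
  have hterm : ∀ j, apol β (C (α j) * dualLin (a j) ^ (t + u))
      = (α j * (((t + u).descFactorial (t + u - w) : k) * eval (a j) β))
          • dualLin (a j) ^ w := by
    intro j
    rw [C_mul', Stmt5Aux.apol_smul_right, Stmt5Aux.apol_isHomogeneous_linpow (a j) hβ (t + u),
      smul_smul]
    have he : t + u - (t + u - w) = w := by omega
    rw [he]
  rw [Finset.sum_congr rfl fun j _ => hterm j]
  rw [Finset.sum_eq_single i]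
  · rw [hev i, if_pos rfl, smul_smul]
    have hfacn : (w.factorial : ℕ) * (t + u).descFactorial (t + u - w)
        = (t + u).factorial := by
      have h := Nat.factorial_mul_descFactorial (show t + u - w ≤ t + u by omega)
      rwa [show t + u - (t + u - w) = w by omega] at h
    have hfac : ((w.factorial : k)) * (((t + u).descFactorial (t + u - w) : k))
        = ((t + u).factorial : k) := by exact_mod_cast congrArg (Nat.cast : ℕ → k) hfacn
    have hf0 : ((t + u).factorial : k) ≠ 0 := Nat.cast_ne_zero.mpr (Nat.factorial_ne_zero _)
    have hsc : (((t + u).factorial : k))⁻¹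
        * (α i * (((t + u).descFactorial (t + u - w) : k)
            * ((w.factorial : k) * (α i)⁻¹))) = 1 := by
      rw [show (((t + u).factorial : k))⁻¹
          * (α i * (((t + u).descFactorial (t + u - w) : k)
              * ((w.factorial : k) * (α i)⁻¹)))
          = (α i * (α i)⁻¹) * ((((t + u).factorial : k))⁻¹
              * ((w.factorial : k) * (((t + u).descFactorial (t + u - w) : k)))) from by ring,
        hfac, mul_inv_cancel₀ (hα i), inv_mul_cancel₀ hf0, one_mul]
    rw [hsc, one_smul]
  · intro j _ hj
    rw [hev j, if_neg hj, mul_zero, mul_zero, zero_smul]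
  · intro h
    exact absurd (Finset.mem_univ i) h


end
end

section
/- Let X = {P_1,...,P_r} be distinct points of P^n_k with dual linear forms L_1,...,L_r and socle degree s. Given u ≥ 1 and nonzero α_1,...,α_r ∈ k^*, the R-submodule M of Γ generated by F_t = (1/(t+u)!) Σ_{i=1}^r α_i L_i^{t+u}, t ≥ 1, equals the R-submodule generated by all powers L_i^t (t ≥ 1, 1 ≤ i ≤ r); consequently M = I(X)^⊥ and I(X) = Ann_R(M). -/
open MvPolynomial
open scoped Classical

noncomputable section

variable {k : Type} [Field k]

namespace ApolAux

variable {n : ℕ}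

lemma apol_support (f F : MvPolynomial (Fin n) k) : apol f F =
    ∑ α ∈ f.support, ∑ β ∈ F.support,
      if α ≤ β then
        MvPolynomial.monomial (β - α)
          (coeff α f * coeff β F * (β.prod fun i m => ((m.descFactorial (α i) : k))))
      else 0 := rfl

/-- under the gate `α ≤ β` the Finsupp.prod equals the product over `univ`. -/
lemma prod_gate {α β : Fin n →₀ ℕ} (h : α ≤ β) :
    (β.prod fun i m => ((m.descFactorial (α i) : k)))
      = ∏ i : Fin n, (((β i).descFactorial (α i) : k)) := by
  rw [Finsupp.prod]
  apply Finset.prod_subset (Finset.subset_univ _)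
  intro i _ hi
  have hβ : β i = 0 := Finsupp.notMem_support_iff.mp hi
  have hα : α i = 0 := Nat.le_zero.mp (hβ ▸ h i)
  simp [hβ, hα]

/-- Master formula: sum over arbitrary supersets of the supports. -/
lemma apol_eq (f F : MvPolynomial (Fin n) k) (S T : Finset (Fin n →₀ ℕ))
    (hS : f.support ⊆ S) (hT : F.support ⊆ T) : apol f F =
    ∑ α ∈ S, ∑ β ∈ T,
      if α ≤ β then
        MvPolynomial.monomial (β - α)
          (coeff α f * coeff β F * ∏ i : Fin n, (((β i).descFactorial (α i) : k)))
      else 0 := by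
  rw [apol_support]
  rw [Finset.sum_subset hS]
  · apply Finset.sum_congr rfl
    intro α _
    rw [Finset.sum_subset hT]
    · apply Finset.sum_congr rfl
      intro β _
      split_ifs with h
      · rw [prod_gate h]
      · rfl
    · intro β _ hβ
      have : coeff β F = 0 := notMem_support_iff.mp hβ
      simp [this]
  · intro α _ hα
    have : coeff α f = 0 := notMem_support_iff.mp hα
    simp [this]

lemma apol_monomial_monomial (α β : Fin n →₀ ℕ) (c b : k) :
    apol (monomial α c) (monomial β b)
      = if α ≤ β then
          monomial (β - α) (c * b * ∏ i : Fin n, (((β i).descFactorial (α i) : k)))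
        else 0 := by
  by_cases hc : c = 0
  · subst hc
    rw [apol_eq _ _ ({α}) ({β}) (by rw [support_monomial]; split_ifs <;> simp)
      (by rw [support_monomial]; split_ifs <;> simp)]
    simp
  by_cases hb : b = 0
  · subst hb
    rw [apol_eq _ _ ({α}) ({β}) (by rw [support_monomial]; split_ifs <;> simp)
      (by rw [support_monomial]; split_ifs <;> simp)]
    simp
  rw [apol_eq _ _ ({α}) ({β}) (by simp [support_monomial, hc]) (by simp [support_monomial, hb])]
  simp [coeff_monomial]

lemma apol_add_right (f F G : MvPolynomial (Fin n) k) :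
    apol f (F + G) = apol f F + apol f G := by
  classical
  set T := F.support ∪ G.support ∪ (F + G).support with hT
  rw [apol_eq f F f.support T le_rfl (Finset.subset_union_left.trans Finset.subset_union_left),
      apol_eq f G f.support T le_rfl (Finset.subset_union_right.trans Finset.subset_union_left),
      apol_eq f (F + G) f.support T le_rfl Finset.subset_union_right]
  rw [← Finset.sum_add_distrib]
  apply Finset.sum_congr rfl
  intro α _
  rw [← Finset.sum_add_distrib]
  apply Finset.sum_congr rfl
  intro β _
  split_ifs with h
  · rw [coeff_add, ← map_add]
    ring_nf
  · simp

lemma apol_smul_right (f F : MvPolynomial (Fin n) k) (c : k) :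
    apol f (c • F) = c • apol f F := by
  classical
  set T := F.support ∪ (c • F).support with hT
  rw [apol_eq f F f.support T le_rfl Finset.subset_union_left,
      apol_eq f (c • F) f.support T le_rfl Finset.subset_union_right]
  rw [Finset.smul_sum]
  apply Finset.sum_congr rfl
  intro α _
  rw [Finset.smul_sum]
  apply Finset.sum_congr rfl
  intro β _
  split_ifs with h
  · rw [coeff_smul, MvPolynomial.smul_monomial, smul_eq_mul, smul_eq_mul]
    ring_nf
  · simp

lemma apol_zero_right (f : MvPolynomial (Fin n) k) : apol f 0 = 0 := by
  rw [apol_support]; simp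

lemma apol_zero_left (F : MvPolynomial (Fin n) k) : apol 0 F = 0 := by
  rw [apol_support]; simp

lemma apol_add_left (f g F : MvPolynomial (Fin n) k) :
    apol (f + g) F = apol f F + apol g F := by
  classical
  set S := f.support ∪ g.support ∪ (f + g).support with hS
  rw [apol_eq f F S F.support (Finset.subset_union_left.trans Finset.subset_union_left) le_rfl,
      apol_eq g F S F.support (Finset.subset_union_right.trans Finset.subset_union_left) le_rfl,
      apol_eq (f + g) F S F.support Finset.subset_union_right le_rfl]
  rw [← Finset.sum_add_distrib]
  apply Finset.sum_congr rfl
  intro α _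
  rw [← Finset.sum_add_distrib]
  apply Finset.sum_congr rfl
  intro β _
  split_ifs with h
  · rw [coeff_add, ← map_add]
    ring_nf
  · simp

/-- `apol` with fixed first argument, as a linear map. -/
def apolF (f : MvPolynomial (Fin n) k) : MvPolynomial (Fin n) k →ₗ[k] MvPolynomial (Fin n) k where
  toFun F := apol f F
  map_add' := apol_add_right f
  map_smul' c F := apol_smul_right f F c

@[simp] lemma apolF_apply (f F : MvPolynomial (Fin n) k) : apolF f F = apol f F := rfl

end ApolAux

namespace ApolAux
variable {n : ℕ}

lemma descFactorial_add (N a b : ℕ) :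
    N.descFactorial (b + a) = N.descFactorial b * (N - b).descFactorial a := by
  induction a with
  | zero => simp
  | succ a ih =>
      rw [← Nat.add_assoc, Nat.descFactorial_succ, Nat.descFactorial_succ, ih,
        Nat.sub_sub]
      ring

lemma apol_C (c : k) (F : MvPolynomial (Fin n) k) : apol (C c) F = c • F := by
  have : (C c : MvPolynomial (Fin n) k) = monomial 0 c := by
    rw [monomial_zero']
  rw [this, apol_eq _ _ ({0}) F.support (by rw [support_monomial]; split_ifs <;> simp) le_rfl]
  rw [Finset.sum_singleton]
  conv_rhs => rw [(F.as_sum), Finset.smul_sum]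
  apply Finset.sum_congr rfl
  intro β hβ
  rw [if_pos (zero_le : 0 ≤ β)]
  simp [coeff_monomial, MvPolynomial.smul_monomial]

lemma apol_one (F : MvPolynomial (Fin n) k) : apol 1 F = F := by
  have : (1 : MvPolynomial (Fin n) k) = C 1 := rfl
  rw [this, apol_C, one_smul]

lemma apol_mul (f g F : MvPolynomial (Fin n) k) :
    apol (f * g) F = apol f (apol g F) := by
  induction f using MvPolynomial.induction_on' with
  | add f f' hf hf' => rw [add_mul, apol_add_left, apol_add_left, hf, hf']
  | monomial αf cf =>
  induction g using MvPolynomial.induction_on' with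
  | add g g' hg hg' => rw [mul_add, apol_add_left, apol_add_left, apol_add_right, hg, hg']
  | monomial αg cg =>
  induction F using MvPolynomial.induction_on' with
  | add F F' hF hF' => rw [apol_add_right, apol_add_right, apol_add_right, hF, hF']
  | monomial β b =>
  rw [monomial_mul, apol_monomial_monomial]
  conv_rhs => rw [apol_monomial_monomial]
  by_cases hg : αg ≤ β
  · rw [if_pos hg, apol_monomial_monomial]
    by_cases hf : αf ≤ β - αg
    · have h1 : αf + αg ≤ β := by
        intro i
        have := hf i
        have := hg i
        simp only [Finsupp.tsub_apply, Finsupp.add_apply] at *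
        omega
      rw [if_pos h1, if_pos hf]
      have hsub : β - αg - αf = β - (αf + αg) := by
        rw [tsub_tsub, add_comm]
      rw [hsub]
      congr 1
      have hprod : ∀ i : Fin n, ((β i).descFactorial ((αf + αg) i) : k)
          = ((β i).descFactorial (αg i) : k) * (((β - αg) i).descFactorial (αf i) : k) := by
        intro i
        rw [Finsupp.add_apply, Finsupp.tsub_apply, add_comm (αf i) (αg i),
          descFactorial_add, Nat.cast_mul]
      rw [Finset.prod_congr rfl (fun i _ => hprod i), Finset.prod_mul_distrib]
      ring
    · have h1 : ¬ αf + αg ≤ β := by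
        intro hcon
        apply hf
        intro i
        have := hcon i
        have := hg i
        simp only [Finsupp.tsub_apply, Finsupp.add_apply] at *
        omega
      rw [if_neg h1, if_neg hf]
  · have h1 : ¬ αf + αg ≤ β := by
      intro hcon
      apply hg
      intro i
      have := hcon i
      simp only [Finsupp.add_apply] at *
      omega
    rw [if_neg h1, if_neg hg, apol_zero_right]

end ApolAux


namespace ApolAux
variable {n : ℕ}

lemma apol_X (j : Fin n) (F : MvPolynomial (Fin n) k) :
    apol (X j) F = pderiv j F := by
  induction F using MvPolynomial.induction_on' with
  | add F F' hF hF' => rw [apol_add_right, map_add, hF, hF']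
  | monomial β b =>
    have hX : (X j : MvPolynomial (Fin n) k) = monomial (Finsupp.single j 1) 1 := by
      rw [X]
    rw [hX, apol_monomial_monomial, pderiv_monomial]
    by_cases h : Finsupp.single j 1 ≤ β
    · rw [if_pos h]
      congr 1
      have hprod : ∀ i : Fin n, ((β i).descFactorial ((Finsupp.single j 1) i) : k)
          = if i = j then (β j : k) else 1 := by
        intro i
        by_cases hij : i = j
        · subst hij; simp [Finsupp.single_eq_same, Nat.descFactorial]
        · simp [Finsupp.single_eq_of_ne (Ne.symm hij), hij]
      rw [Finset.prod_congr rfl (fun i _ => hprod i), Finset.prod_ite_eq' Finset.univ j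
        (fun _ => (β j : k))]
      simp
    · rw [if_neg h]
      have hβj : β j = 0 := by
        by_contra hne
        apply h
        intro i
        by_cases hij : i = j
        · subst hij; simp [Finsupp.single_eq_same]; omega
        · simp [Finsupp.single_eq_of_ne' (Ne.symm hij)]
      simp [hβj]

lemma pderiv_dualLin (a : Fin n → k) (j : Fin n) :
    pderiv j (dualLin a) = C (a j) := by
  rw [dualLin, map_sum]
  rw [Finset.sum_eq_single j]
  · rw [pderiv_C_mul, pderiv_X_self, mul_one]
  · intro i _ hij
    rw [pderiv_C_mul, pderiv_X_of_ne hij, mul_zero]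
  · simp

lemma apol_X_L (a : Fin n → k) (j : Fin n) (N : ℕ) :
    apol (X j) (dualLin a ^ N) = (N : k) • (a j) • dualLin a ^ (N - 1) := by
  rw [apol_X, pderiv_pow, pderiv_dualLin]
  rw [smul_smul, mul_comm]
  rw [MvPolynomial.smul_eq_C_mul, map_mul, map_natCast]
  ring

lemma apol_X_pow_L (a : Fin n → k) (j : Fin n) (m N : ℕ) :
    apol (X j ^ m) (dualLin a ^ N)
      = ((N.descFactorial m : k)) • (a j ^ m) • dualLin a ^ (N - m) := by
  induction m with
  | zero => simp [apol_one]
  | succ m ih =>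
    rw [pow_succ, mul_comm, apol_mul, ih, apol_smul_right, apol_smul_right, apol_X_L,
      Nat.descFactorial_succ]
    rw [smul_smul, smul_smul, smul_smul, smul_smul]
    rw [Nat.sub_sub]
    congr 1
    push_cast
    ring

lemma apol_prod_L (a : Fin n → k) (e : Fin n → ℕ) (s : Finset (Fin n)) (N : ℕ) :
    apol (∏ i ∈ s, X i ^ e i) (dualLin a ^ N)
      = ((N.descFactorial (∑ i ∈ s, e i) : k)) • (∏ i ∈ s, a i ^ e i)
          • dualLin a ^ (N - ∑ i ∈ s, e i) := by
  induction s using Finset.induction_on with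
  | empty => simp [apol_one]
  | insert _ _ hj ih =>
    rename_i j s
    rw [Finset.prod_insert hj, Finset.sum_insert hj, Finset.prod_insert hj]
    rw [apol_mul, ih, apol_smul_right, apol_smul_right, apol_X_pow_L]
    rw [smul_smul, smul_smul, smul_smul, smul_smul]
    have hd : N.descFactorial (e j + ∑ i ∈ s, e i)
        = N.descFactorial (∑ i ∈ s, e i) * (N - ∑ i ∈ s, e i).descFactorial (e j) :=
      by rw [Nat.add_comm]; exact descFactorial_add N (e j) (∑ i ∈ s, e i)
    rw [Nat.sub_sub]
    rw [hd]
    have hexp : N - (∑ i ∈ s, e i + e j) = N - (e j + ∑ i ∈ s, e i) := by omega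
    rw [hexp]
    congr 1
    push_cast
    ring

lemma apol_monomial_L (a : Fin n → k) (β : Fin n →₀ ℕ) (c : k) (N : ℕ) :
    apol (monomial β c) (dualLin a ^ N)
      = ((N.descFactorial (β.sum fun _ e => e) : k))
          • (eval a (monomial β c)) • dualLin a ^ (N - β.sum fun _ e => e) := by
  have hmon : (monomial β c : MvPolynomial (Fin n) k)
      = C c * ∏ i : Fin n, X i ^ β i := by
    rw [monomial_eq]
    congr 1
    rw [Finsupp.prod]
    refine (Finset.prod_subset (Finset.subset_univ _) ?_)
    intro i _ hi
    simp [Finsupp.notMem_support_iff.mp hi]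
  have hsum : (β.sum fun _ e => e) = ∑ i : Fin n, β i := by
    rw [Finsupp.sum]
    apply Finset.sum_subset (Finset.subset_univ _)
    intro i _ hi
    exact Finsupp.notMem_support_iff.mp hi
  rw [hmon, apol_mul, apol_prod_L, apol_C, hsum, map_mul, eval_C]
  have : (β.prod fun i e => a i ^ e) = ∏ i : Fin n, a i ^ β i := by
    rw [Finsupp.prod]
    apply Finset.prod_subset (Finset.subset_univ _)
    intro i _ hi
    simp [Finsupp.notMem_support_iff.mp hi]
  rw [smul_smul, smul_smul, smul_smul]
  congr 1
  rw [map_prod]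
  simp only [map_pow, eval_X]
  ring

end ApolAux

namespace ApolAux
variable {n : ℕ}

lemma apol_sum_left {ι : Type*} (s : Finset ι) (f : ι → MvPolynomial (Fin n) k)
    (F : MvPolynomial (Fin n) k) :
    apol (∑ i ∈ s, f i) F = ∑ i ∈ s, apol (f i) F := by
  induction s using Finset.induction_on with
  | empty => simp [apol_zero_left]
  | insert _ _ hj ih =>
    rename_i j s
    rw [Finset.sum_insert hj, Finset.sum_insert hj, apol_add_left, ih]

lemma degree_eq_sum (β : Fin n →₀ ℕ) : β.degree = β.sum fun _ e => e := rfl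

lemma apol_isHomogeneous_L {g : MvPolynomial (Fin n) k} {d : ℕ} (hg : g.IsHomogeneous d)
    (a : Fin n → k) (N : ℕ) :
    apol g (dualLin a ^ N)
      = ((N.descFactorial d : k)) • (eval a g) • dualLin a ^ (N - d) := by
  conv_lhs => rw [g.as_sum]
  rw [apol_sum_left]
  conv_rhs => rw [g.as_sum]
  rw [map_sum, Finset.sum_smul, Finset.smul_sum]
  apply Finset.sum_congr rfl
  intro β hβ
  have hdeg : (β.sum fun _ e => e) = d := by
    rw [← degree_eq_sum, Finsupp.degree_eq_weight_one]
    exact hg (mem_support_iff.mp hβ)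
  rw [apol_monomial_L, hdeg]

lemma isHomogeneous_dualLin (a : Fin n → k) : (dualLin a).IsHomogeneous 1 := by
  rw [dualLin]
  apply MvPolynomial.IsHomogeneous.sum
  intro i _
  exact MvPolynomial.isHomogeneous_C_mul_X _ _

lemma eval_smul_isHomogeneous {g : MvPolynomial (Fin n) k} {d : ℕ} (hg : g.IsHomogeneous d)
    (t : k) (a : Fin n → k) : eval (t • a) g = t ^ d * eval a g := by
  conv_lhs => rw [g.as_sum]
  conv_rhs => rw [g.as_sum]
  rw [map_sum, map_sum, Finset.mul_sum]
  apply Finset.sum_congr rfl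
  intro β hβ
  have hdeg : (β.sum fun _ e => e) = d := by
    rw [← degree_eq_sum, Finsupp.degree_eq_weight_one]
    exact hg (mem_support_iff.mp hβ)
  rw [eval_monomial, eval_monomial, ← hdeg]
  rw [Finsupp.prod, Finsupp.prod, Finsupp.sum, ← Finset.prod_pow_eq_pow_sum,
    mul_left_comm, ← Finset.prod_mul_distrib]
  congr 1
  apply Finset.prod_congr rfl
  intro i _
  rw [Pi.smul_apply, smul_eq_mul, mul_pow]

end ApolAux


namespace ApolAux
variable {n : ℕ}

lemma mem_projIdeal_iff {r : ℕ} (a : Fin r → Fin n → k) (g : MvPolynomial (Fin n) k) :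
    g ∈ projIdeal a ↔ ∀ i (t : k), eval (t • a i) g = 0 := by
  simp [projIdeal, Ideal.mem_iInf, RingHom.mem_ker]

lemma eval_smul_expand (b : Fin n → k) (t : k) (g : MvPolynomial (Fin n) k) :
    eval (t • b) g = ∑ d ∈ Finset.range (g.totalDegree + 1),
      t ^ d * eval b (homogeneousComponent d g) := by
  conv_lhs => rw [← g.sum_homogeneousComponent, map_sum]
  apply Finset.sum_congr rfl
  intro d _
  exact eval_smul_isHomogeneous (homogeneousComponent_isHomogeneous d g) t b

lemma mem_projIdeal_iff_components [CharZero k] {r : ℕ} (a : Fin r → Fin n → k)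
    (g : MvPolynomial (Fin n) k) :
    g ∈ projIdeal a ↔ ∀ i d, eval (a i) (homogeneousComponent d g) = 0 := by
  rw [mem_projIdeal_iff]
  constructor
  · intro h i d
    by_cases hd : d ≤ g.totalDegree
    · set q : Polynomial k := ∑ e ∈ Finset.range (g.totalDegree + 1),
        Polynomial.C (eval (a i) (homogeneousComponent e g)) * Polynomial.X ^ e with hq
      have hqeval : ∀ t : k, q.eval t = 0 := by
        intro t
        rw [hq]
        simp only [Polynomial.eval_finset_sum, Polynomial.eval_mul, Polynomial.eval_C,
          Polynomial.eval_pow, Polynomial.eval_X]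
        rw [Finset.sum_congr rfl (fun x _ => mul_comm ((eval (a i)) ((homogeneousComponent x) g)) (t ^ x)), ← eval_smul_expand (a i) t g]
        exact h i t
      have hq0 : q = 0 := by
        apply Polynomial.funext
        intro t
        rw [hqeval t, Polynomial.eval_zero]
      have := congrArg (fun p => Polynomial.coeff p d) hq0
      simp only [hq, Polynomial.finset_sum_coeff, Polynomial.coeff_C_mul,
        Polynomial.coeff_X_pow, Polynomial.coeff_zero, mul_ite, mul_one, mul_zero] at this
      rw [Finset.sum_ite_eq (Finset.range (g.totalDegree + 1)) d] at this
      simpa [Finset.mem_range, Nat.lt_succ_iff, hd] using this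
    · rw [homogeneousComponent_eq_zero _ _ (lt_of_not_ge hd)]
      simp
  · intro h i t
    rw [eval_smul_expand]
    apply Finset.sum_eq_zero
    intro d _
    rw [h i d, mul_zero]

end ApolAux

namespace ApolAux
variable {n : ℕ}

lemma coeff_zero_apol (g F : MvPolynomial (Fin n) k) :
    coeff 0 (apol g F)
      = ∑ β ∈ g.support, coeff β g * coeff β F * ∏ i : Fin n, ((β i).factorial : k) := by
  rw [apol_eq g F g.support (F.support ∪ g.support) le_rfl Finset.subset_union_left]
  rw [MvPolynomial.coeff_sum]
  apply Finset.sum_congr rfl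
  intro α hα
  rw [MvPolynomial.coeff_sum]
  have hpt : ∀ β ∈ F.support ∪ g.support,
      coeff 0 (if α ≤ β then
          monomial (β - α) (coeff α g * coeff β F * ∏ i : Fin n, (((β i).descFactorial (α i) : k)))
        else 0)
      = if β = α then coeff α g * coeff α F * ∏ i : Fin n, (((α i).factorial : k)) else 0 := by
    intro β _
    by_cases hle : α ≤ β
    · rw [if_pos hle, coeff_monomial]
      by_cases heq : β = α
      · subst heq
        rw [if_pos (by simp), if_pos rfl]
        congr 1
        apply Finset.prod_congr rfl
        intro i _
        rw [Nat.descFactorial_self]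
      · rw [if_neg, if_neg heq]
        intro hcon
        apply heq
        exact le_antisymm (tsub_eq_zero_iff_le.mp hcon) hle
    · rw [if_neg hle, if_neg]
      · simp
      · intro heq; subst heq; exact hle le_rfl
  rw [Finset.sum_congr rfl hpt, Finset.sum_ite_eq' (F.support ∪ g.support) α,
    if_pos (Finset.mem_union_right _ hα)]

lemma coeff_zero_apol_homog {g : MvPolynomial (Fin n) k} {e : ℕ} (hg : g.IsHomogeneous e)
    (F : MvPolynomial (Fin n) k) :
    coeff 0 (apol g (homogeneousComponent e F)) = coeff 0 (apol g F) := by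
  rw [coeff_zero_apol, coeff_zero_apol]
  apply Finset.sum_congr rfl
  intro β hβ
  have hdeg : β.degree = e := by
    rw [Finsupp.degree_eq_weight_one]; exact hg (mem_support_iff.mp hβ)
  rw [coeff_homogeneousComponent]
  rw [if_pos]
  · exact hdeg
end ApolAux

namespace ApolAux
variable {n : ℕ}

/-- span of all powers of the dual linear forms -/
def Vspan {r : ℕ} (a : Fin r → Fin n → k) : Submodule k (MvPolynomial (Fin n) k) :=
  Submodule.span k {G | ∃ (i : Fin r) (m : ℕ), G = dualLin (a i) ^ m}

lemma isHomogeneous_dualLin_pow (b : Fin n → k) (m : ℕ) :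
    (dualLin b ^ m).IsHomogeneous m := by
  have := (isHomogeneous_dualLin b).pow m
  rwa [one_mul] at this

lemma key_perp_sub [CharZero k] {r : ℕ} (a : Fin r → Fin n → k)
    (F : MvPolynomial (Fin n) k) (hF : ∀ g ∈ projIdeal a, apol g F = 0) :
    F ∈ Vspan a := by
  rw [← F.sum_homogeneousComponent]
  apply Submodule.sum_mem
  intro e _
  set Fe := homogeneousComponent e F with hFe
  -- the span of the pure e-th powers
  set W : Submodule k (MvPolynomial (Fin n) k)
    := Submodule.span k {G | ∃ (i : Fin r), G = dualLin (a i) ^ e} with hW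
  have hWV : W ≤ Vspan a := by
    apply Submodule.span_mono
    rintro G ⟨i, rfl⟩
    exact ⟨i, e, rfl⟩
  apply hWV
  rw [← Subspace.forall_mem_dualAnnihilator_apply_eq_zero_iff W Fe]
  intro φ hφ
  rw [Submodule.mem_dualAnnihilator] at hφ
  -- the finite set of relevant exponents
  set T : Finset (Fin n →₀ ℕ) :=
    Fe.support ∪ (Finset.univ : Finset (Fin r)).biUnion
      (fun i => (dualLin (a i) ^ e).support) with hT
  have hdegT : ∀ β ∈ T, β.degree = e := by
    intro β hβ
    rw [hT, Finset.mem_union] at hβ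
    rcases hβ with hβ | hβ
    · have := (homogeneousComponent_isHomogeneous e F) (mem_support_iff.mp hβ)
      rwa [Finsupp.degree_eq_weight_one]
    · rw [Finset.mem_biUnion] at hβ
      obtain ⟨i, _, hβ⟩ := hβ
      have := (isHomogeneous_dualLin_pow (a i) e) (mem_support_iff.mp hβ)
      rwa [Finsupp.degree_eq_weight_one]
  -- the representing homogeneous polynomial
  set g : MvPolynomial (Fin n) k := ∑ β ∈ T,
    monomial β ((∏ i : Fin n, ((β i).factorial : k))⁻¹ * φ (monomial β 1)) with hg
  have hsupg : g.support ⊆ T := by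
    refine (MvPolynomial.support_sum).trans ?_
    intro β hβ
    rw [Finset.mem_biUnion] at hβ
    obtain ⟨β', hβ', hmem⟩ := hβ
    rw [support_monomial] at hmem
    split_ifs at hmem
    · exact absurd hmem (Finset.notMem_empty β)
    · rwa [Finset.mem_singleton.mp hmem]
  have hcoeffg : ∀ β ∈ T,
      coeff β g = (∏ i : Fin n, ((β i).factorial : k))⁻¹ * φ (monomial β 1) := by
    intro β hβ
    rw [hg, MvPolynomial.coeff_sum]
    rw [Finset.sum_congr rfl (fun β' _ => coeff_monomial β β' _)]
    rw [Finset.sum_ite_eq' T β, if_pos hβ]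
  have hcoeffg' : ∀ β, β ∉ T → coeff β g = 0 := by
    intro β hβ
    exact notMem_support_iff.mp (fun hmem => hβ (hsupg hmem))
  have hgh : g.IsHomogeneous e := by
    rw [hg]
    apply MvPolynomial.IsHomogeneous.sum
    intro β hβ
    exact isHomogeneous_monomial _ (hdegT β hβ)
  -- representation property
  have hfact_ne : ∀ β : Fin n →₀ ℕ, (∏ i : Fin n, ((β i).factorial : k)) ≠ 0 := by
    intro β
    apply Finset.prod_ne_zero_iff.mpr
    intro i _
    exact_mod_cast Nat.cast_ne_zero.mpr (Nat.factorial_ne_zero _)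
  have hrep : ∀ F' : MvPolynomial (Fin n) k, F'.support ⊆ T →
      coeff 0 (apol g F') = φ F' := by
    intro F' hsup
    rw [coeff_zero_apol]
    rw [Finset.sum_subset hsupg (fun β _ hβ => by
      rw [notMem_support_iff.mp hβ]; ring)]
    have : ∀ β ∈ T, coeff β g * coeff β F' * ∏ i : Fin n, ((β i).factorial : k)
        = φ (monomial β (coeff β F')) := by
      intro β hβ
      rw [hcoeffg β hβ]
      have : monomial β (coeff β F') = (coeff β F') • monomial β (1 : k) := by
        rw [MvPolynomial.smul_monomial, smul_eq_mul, mul_one]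
      rw [this, map_smul, smul_eq_mul]
      field_simp [hfact_ne β]
    rw [Finset.sum_congr rfl this, ← map_sum]
    congr 1
    conv_rhs => rw [F'.as_sum]
    exact (Finset.sum_subset hsup (fun β _ hβ => by
      rw [notMem_support_iff.mp hβ, map_zero])).symm
  -- g vanishes at the points
  have hval : ∀ i, eval (a i) g = 0 := by
    intro i
    have hLmem : dualLin (a i) ^ e ∈ W := Submodule.subset_span ⟨i, rfl⟩
    have h1 : coeff 0 (apol g (dualLin (a i) ^ e)) = 0 := by
      rw [hrep _ (by
        intro β hβ
        rw [hT, Finset.mem_union]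
        right
        rw [Finset.mem_biUnion]
        exact ⟨i, Finset.mem_univ i, hβ⟩)]
      exact hφ _ hLmem
    rw [apol_isHomogeneous_L hgh (a i) e, Nat.sub_self, pow_zero] at h1
    rw [Nat.descFactorial_self] at h1
    have : ((e.factorial : k)) * eval (a i) g = 0 := by
      rw [smul_smul, smul_eq_C_mul, mul_one] at h1
      have := h1
      rwa [MvPolynomial.coeff_C 0, if_pos rfl] at this
    rcases mul_eq_zero.mp this with h | h
    · exact absurd h (by exact_mod_cast Nat.factorial_ne_zero e)
    · exact h
  -- hence g is in the ideal
  have hgI : g ∈ projIdeal a := by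
    rw [mem_projIdeal_iff]
    intro i t
    rw [eval_smul_isHomogeneous hgh, hval i, mul_zero]
  -- conclude
  have h0 : coeff 0 (apol g F) = 0 := by rw [hF g hgI, coeff_zero]
  have : coeff 0 (apol g Fe) = 0 := by
    rw [hFe, coeff_zero_apol_homog hgh F]
    exact h0
  rw [hrep Fe (by rw [hT]; exact Finset.subset_union_left)] at this
  exact this

end ApolAux

namespace ApolAux
variable {n : ℕ}

lemma apol_L_expand (g : MvPolynomial (Fin n) k) (b : Fin n → k) (N : ℕ) :
    apol g (dualLin b ^ N) = ∑ d ∈ Finset.range (g.totalDegree + 1),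
      ((N.descFactorial d : k)) • (eval b (homogeneousComponent d g))
        • dualLin b ^ (N - d) := by
  conv_lhs => rw [← g.sum_homogeneousComponent, apol_sum_left]
  apply Finset.sum_congr rfl
  intro d _
  exact apol_isHomogeneous_L (homogeneousComponent_isHomogeneous d g) b N

lemma apol_projIdeal_L [CharZero k] {r : ℕ} {a : Fin r → Fin n → k}
    {g : MvPolynomial (Fin n) k} (hg : g ∈ projIdeal a) (i : Fin r) (N : ℕ) :
    apol g (dualLin (a i) ^ N) = 0 := by
  rw [apol_L_expand]
  apply Finset.sum_eq_zero
  intro d _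
  rw [(mem_projIdeal_iff_components a g).mp hg i d, zero_smul, smul_zero]

lemma apol_L_mem_Vspan {r : ℕ} (a : Fin r → Fin n → k) (g : MvPolynomial (Fin n) k)
    (i : Fin r) (N : ℕ) : apol g (dualLin (a i) ^ N) ∈ Vspan a := by
  rw [apol_L_expand]
  apply Submodule.sum_mem
  intro d _
  apply Submodule.smul_mem
  apply Submodule.smul_mem
  exact Submodule.subset_span ⟨i, N - d, rfl⟩

lemma dualLin_ne_zero {b : Fin n → k} (hb : b ≠ 0) : dualLin b ≠ 0 := by
  obtain ⟨j, hj⟩ := Function.ne_iff.mp hb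
  intro hcon
  apply hj
  have : coeff (Finsupp.single j 1) (dualLin b) = b j := by
    rw [dualLin, MvPolynomial.coeff_sum]
    rw [Finset.sum_congr rfl (fun l _ => by
      rw [C_mul_X_eq_monomial, coeff_monomial] :
      ∀ l ∈ Finset.univ, coeff (Finsupp.single j 1) (C (b l) * X l)
        = if Finsupp.single l 1 = Finsupp.single j 1 then b l else 0)]
    rw [Finset.sum_congr rfl (fun l _ => by
      simp only [Finsupp.single_left_inj (one_ne_zero (α := ℕ))] :
      ∀ l ∈ Finset.univ, (if Finsupp.single l 1 = Finsupp.single j 1 then b l else 0)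
        = if l = j then b l else 0)]
    rw [Finset.sum_ite_eq' Finset.univ j b, if_pos (Finset.mem_univ j)]
  rw [hcon, coeff_zero] at this
  exact this.symm

lemma descFactorial_cast_ne_zero [CharZero k] {d N : ℕ} (h : d ≤ N) :
    ((N.descFactorial d : k)) ≠ 0 := by
  have : N.descFactorial d ≠ 0 := by
    rw [Ne, Nat.descFactorial_eq_zero_iff_lt]
    omega
  exact_mod_cast this

end ApolAux


namespace ApolAux
variable {n : ℕ}

lemma exists_sep_linear {r : ℕ} {a : Fin r → Fin n → k} (ha : ProjDistinct a)
    {i j : Fin r} (hij : j ≠ i) :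
    ∃ p : MvPolynomial (Fin n) k, p.IsHomogeneous 1 ∧ eval (a j) p = 0
      ∧ eval (a i) p ≠ 0 := by
  obtain ⟨l0, hl0⟩ := Function.ne_iff.mp (ha.1 j)
  simp only [Pi.zero_apply] at hl0
  have hl1 : ∃ l1, a j l0 * a i l1 - a j l1 * a i l0 ≠ 0 := by
    by_contra hcon
    push_neg at hcon
    apply ha.2 i j (fun h => hij (h.symm)) (a i l0 / a j l0)
    funext l
    have := hcon l
    have h2 : a j l0 * a i l = a j l * a i l0 := by linear_combination this
    rw [Pi.smul_apply, smul_eq_mul]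
    field_simp
    linear_combination h2
  obtain ⟨l1, hl1⟩ := hl1
  refine ⟨C (a j l0) * X l1 - C (a j l1) * X l0, ?_, ?_, ?_⟩
  · exact (isHomogeneous_C_mul_X _ _).sub (isHomogeneous_C_mul_X _ _)
  · simp only [map_sub, map_mul, eval_C, eval_X]
    ring
  · simpa only [map_sub, map_mul, eval_C, eval_X] using hl1

lemma exists_separator {r : ℕ} {a : Fin r → Fin n → k} (ha : ProjDistinct a)
    (i : Fin r) (d : ℕ) (hd : r - 1 ≤ d) :
    ∃ g : MvPolynomial (Fin n) k, g.IsHomogeneous d ∧ eval (a i) g ≠ 0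
      ∧ ∀ j, j ≠ i → eval (a j) g = 0 := by
  have hsep : ∀ j : Fin r, ∃ p : MvPolynomial (Fin n) k,
      p.IsHomogeneous 1 ∧ (j ≠ i → eval (a j) p = 0 ∧ eval (a i) p ≠ 0) := by
    intro j
    by_cases hj : j ≠ i
    · obtain ⟨p, h1, h2, h3⟩ := exists_sep_linear ha hj
      exact ⟨p, h1, fun _ => ⟨h2, h3⟩⟩
    · exact ⟨0, isHomogeneous_zero _ _ _, fun h => absurd h hj⟩
  choose p h1 h2 using hsep
  obtain ⟨l, hl⟩ := Function.ne_iff.mp (ha.1 i)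
  simp only [Pi.zero_apply] at hl
  refine ⟨(∏ j ∈ Finset.univ.erase i, p j) * X l ^ (d - (r - 1)), ?_, ?_, ?_⟩
  · have hprod : (∏ j ∈ Finset.univ.erase i, p j).IsHomogeneous (r - 1) := by
      have := MvPolynomial.IsHomogeneous.prod (Finset.univ.erase i) p (fun _ => 1)
        (fun j _ => h1 j)
      rwa [Finset.sum_const, smul_eq_mul, mul_one, Finset.card_erase_of_mem
        (Finset.mem_univ i), Finset.card_univ, Fintype.card_fin] at this
    have := hprod.mul ((isHomogeneous_X k l).pow (d - (r - 1)))
    rwa [one_mul, Nat.add_sub_cancel' hd] at this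
  · rw [map_mul, map_prod, map_pow, eval_X]
    apply mul_ne_zero
    · rw [Finset.prod_ne_zero_iff]
      intro j hj
      exact (h2 j (Finset.ne_of_mem_erase hj)).2
    · exact pow_ne_zero _ hl
  · intro j hj
    rw [map_mul, map_prod]
    apply mul_eq_zero_of_left
    exact Finset.prod_eq_zero (Finset.mem_erase.mpr ⟨hj, Finset.mem_univ j⟩)
      ((h2 j hj).1)

end ApolAux




namespace ApolAux
variable {n r : ℕ}

lemma apol_sum_right {ι : Type*} (g : MvPolynomial (Fin n) k) (s : Finset ι)
    (f : ι → MvPolynomial (Fin n) k) :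
    apol g (∑ i ∈ s, f i) = ∑ i ∈ s, apol g (f i) :=
  map_sum (apolF g) f s

lemma rspan_famF_le_Vspan (a : Fin r → Fin n → k) (α : Fin r → k) (u : ℕ) :
    Rspan (Set.range fun t : ℕ => famF a α u (t + 1)) ≤ Vspan a := by
  apply Submodule.span_le.mpr
  rintro G ⟨g, F, ⟨t, rfl⟩, rfl⟩
  simp only [famF]
  rw [apol_smul_right, apol_sum_right]
  apply Submodule.smul_mem
  apply Submodule.sum_mem
  intro i _
  rw [← MvPolynomial.smul_eq_C_mul, apol_smul_right]
  exact Submodule.smul_mem _ _ (apol_L_mem_Vspan a g i _)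

lemma rspan_pows_le_Vspan (a : Fin r → Fin n → k) :
    Rspan {G | ∃ (i : Fin r) (t : ℕ), 1 ≤ t ∧ G = dualLin (a i) ^ t} ≤ Vspan a := by
  apply Submodule.span_le.mpr
  rintro G ⟨g, F, ⟨i, t, _, rfl⟩, rfl⟩
  exact apol_L_mem_Vspan a g i t

lemma Vspan_le_rspan_pows (a : Fin r → Fin n → k) (ha : ProjDistinct a) :
    Vspan a ≤ Rspan {G | ∃ (i : Fin r) (t : ℕ), 1 ≤ t ∧ G = dualLin (a i) ^ t} := by
  apply Submodule.span_le.mpr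
  rintro G ⟨i, m, rfl⟩
  match m with
  | (m + 1) =>
    exact Submodule.subset_span
      ⟨1, dualLin (a i) ^ (m + 1), ⟨i, m + 1, by omega, rfl⟩, (apol_one _).symm⟩
  | 0 =>
    obtain ⟨j, hj⟩ := Function.ne_iff.mp (ha.1 i)
    simp only [Pi.zero_apply] at hj
    have hX : apol (X j) (dualLin (a i) ^ 1) = (a i j) • dualLin (a i) ^ 0 := by
      rw [apol_X_L]
      norm_num
    have : dualLin (a i) ^ 0 = (a i j)⁻¹ • apol (X j) (dualLin (a i) ^ 1) := by
      rw [hX, smul_smul, inv_mul_cancel₀ hj, one_smul]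
    rw [this]
    exact Submodule.smul_mem _ _ (Submodule.subset_span
      ⟨X j, dualLin (a i) ^ 1, ⟨i, 1, le_rfl, rfl⟩, rfl⟩)

lemma Vspan_le_rspan_famF [CharZero k] (a : Fin r → Fin n → k) (ha : ProjDistinct a)
    (α : Fin r → k) (hα : ∀ i, α i ≠ 0) (u : ℕ) :
    Vspan a ≤ Rspan (Set.range fun t : ℕ => famF a α u (t + 1)) := by
  apply Submodule.span_le.mpr
  rintro G ⟨i, m, rfl⟩
  set d := r + 1 + u with hd
  set t := r + m with ht
  set N := t + 1 + u with hN
  obtain ⟨g, hgh, hgi, hgj⟩ := exists_separator ha i d (by omega)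
  have hNd : N - d = m := by omega
  have hdN : d ≤ N := by omega
  have hcomp : apol g (famF a α u (t + 1))
      = ((((t + 1) + u).factorial : k)⁻¹ * α i * (N.descFactorial d : k) * eval (a i) g)
          • dualLin (a i) ^ m := by
    simp only [famF]
    rw [apol_smul_right, apol_sum_right]
    have hterm : ∀ j : Fin r, apol g (C (α j) * dualLin (a j) ^ ((t + 1) + u))
        = α j • ((N.descFactorial d : k) • eval (a j) g • dualLin (a j) ^ (N - d)) := by
      intro j
      rw [← MvPolynomial.smul_eq_C_mul, apol_smul_right, apol_isHomogeneous_L hgh]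
    rw [Finset.sum_congr rfl (fun j _ => hterm j)]
    rw [Finset.sum_eq_single i (fun j _ hji => by
      rw [hgj j hji, zero_smul, smul_zero, smul_zero]) (fun hcon =>
      absurd (Finset.mem_univ i) hcon)]
    rw [hNd, smul_smul, smul_smul, smul_smul, mul_assoc, mul_assoc]
  set c : k := (((t + 1) + u).factorial : k)⁻¹ * α i * (N.descFactorial d : k) * eval (a i) g
    with hc
  have hcne : c ≠ 0 := by
    refine mul_ne_zero (mul_ne_zero (mul_ne_zero ?_ ?_) ?_) ?_
    · exact inv_ne_zero (by exact_mod_cast Nat.factorial_ne_zero _)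
    · exact hα i
    · exact descFactorial_cast_ne_zero hdN
    · exact hgi
  have : dualLin (a i) ^ m = c⁻¹ • apol g (famF a α u (t + 1)) := by
    rw [hcomp, smul_smul, inv_mul_cancel₀ hcne, one_smul]
  rw [this]
  exact Submodule.smul_mem _ _ (Submodule.subset_span
    ⟨g, famF a α u (t + 1), ⟨t, rfl⟩, rfl⟩)

lemma Vspan_le_perp [CharZero k] (a : Fin r → Fin n → k) {g : MvPolynomial (Fin n) k}
    (hg : g ∈ projIdeal a) : Vspan a ≤ LinearMap.ker (apolF g) := by
  apply Submodule.span_le.mpr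
  rintro G ⟨i, m, rfl⟩
  rw [SetLike.mem_coe, LinearMap.mem_ker, apolF_apply]
  exact apol_projIdeal_L hg i m

end ApolAux

namespace ApolAux
variable {n r : ℕ}

lemma eval_component_eq_zero_of_apol [CharZero k] (a : Fin r → Fin n → k)
    (ha : ProjDistinct a) (g : MvPolynomial (Fin n) k) (i : Fin r)
    (h : apol g (dualLin (a i) ^ (g.totalDegree + 1)) = 0) (e : ℕ)
    (he : e ≤ g.totalDegree) : eval (a i) (homogeneousComponent e g) = 0 := by
  rw [apol_L_expand] at h
  have hcomp := congrArg (homogeneousComponent (g.totalDegree + 1 - e)) h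
  rw [map_sum, map_zero] at hcomp
  have hterm : ∀ d ∈ Finset.range (g.totalDegree + 1),
      homogeneousComponent (g.totalDegree + 1 - e) ((((g.totalDegree + 1).descFactorial d : k))
          • (eval (a i) (homogeneousComponent d g))
          • dualLin (a i) ^ (g.totalDegree + 1 - d))
      = if d = e then (((g.totalDegree + 1).descFactorial d : k))
          • (eval (a i) (homogeneousComponent d g))
          • dualLin (a i) ^ (g.totalDegree + 1 - d) else 0 := by
    intro d hd
    rw [Finset.mem_range] at hd
    rw [map_smul, map_smul, homogeneousComponent_of_mem
      ((mem_homogeneousSubmodule _ _).mpr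
        (isHomogeneous_dualLin_pow (a i) (g.totalDegree + 1 - d)))]
    by_cases hde : d = e
    · subst hde
      rw [if_pos rfl, if_pos rfl]
    · rw [if_neg (by omega), if_neg hde, smul_zero, smul_zero]
  rw [Finset.sum_congr rfl hterm, Finset.sum_ite_eq' (Finset.range (g.totalDegree + 1)) e,
    if_pos (Finset.mem_range.mpr (by omega))] at hcomp
  rcases smul_eq_zero.mp hcomp with hc | hc
  · exact absurd hc (descFactorial_cast_ne_zero (by omega))
  rcases smul_eq_zero.mp hc with hc | hc
  · exact hc
  · exact absurd hc (pow_ne_zero _ (dualLin_ne_zero (ha.1 i)))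

end ApolAux


/-- the `R`-submodule generated by the `F_t` equals the one generated by the
powers `L_i^t`; it is `I(X)^⊥`, and `I(X)` is its annihilator. -/
theorem stmt6 [CharZero k] [IsAlgClosed k] (n r s u : ℕ) (hu : 1 ≤ u)
    (a : Fin r → Fin (n + 1) → k) (ha : ProjDistinct a)
    (hs : IsSocleDegree (projIdeal a) r s)
    (α : Fin r → k) (hα : ∀ i, α i ≠ 0) :
    Rspan (Set.range fun t : ℕ => famF a α u (t + 1))
        = Rspan {G | ∃ i : Fin r, ∃ t : ℕ, 1 ≤ t ∧ G = dualLin (a i) ^ t}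
    ∧ ((Rspan (Set.range fun t : ℕ => famF a α u (t + 1)) :
          Submodule k (MvPolynomial (Fin (n + 1)) k)) : Set (MvPolynomial (Fin (n + 1)) k))
        = perp ((projIdeal a : Ideal (MvPolynomial (Fin (n + 1)) k)) : Set (MvPolynomial (Fin (n + 1)) k))
    ∧ ((projIdeal a : Ideal (MvPolynomial (Fin (n + 1)) k)) : Set (MvPolynomial (Fin (n + 1)) k))
        = {g | ∀ G ∈ (Rspan (Set.range fun t : ℕ => famF a α u (t + 1)) :
            Submodule k (MvPolynomial (Fin (n + 1)) k)), apol g G = 0} := by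
  classical
  have hS1V : Rspan (Set.range fun t : ℕ => famF a α u (t + 1)) = ApolAux.Vspan a :=
    le_antisymm (ApolAux.rspan_famF_le_Vspan a α u) (ApolAux.Vspan_le_rspan_famF a ha α hα u)
  have hS2V : Rspan {G | ∃ i : Fin r, ∃ t : ℕ, 1 ≤ t ∧ G = dualLin (a i) ^ t}
      = ApolAux.Vspan a :=
    le_antisymm (ApolAux.rspan_pows_le_Vspan a) (ApolAux.Vspan_le_rspan_pows a ha)
  refine ⟨hS1V.trans hS2V.symm, ?_, ?_⟩
  · rw [hS1V]
    ext F
    simp only [SetLike.mem_coe]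
    constructor
    · intro hF g hg
      have := ApolAux.Vspan_le_perp a hg hF
      simpa using this
    · intro hF
      exact ApolAux.key_perp_sub a F (fun g hg => hF g hg)
  · ext g
    simp only [SetLike.mem_coe, Set.mem_setOf_eq]
    constructor
    · intro hg G hG
      rw [hS1V] at hG
      have := ApolAux.Vspan_le_perp a hg hG
      simpa using this
    · intro h
      rw [ApolAux.mem_projIdeal_iff_components]
      intro i e
      by_cases he : e ≤ g.totalDegree
      · apply ApolAux.eval_component_eq_zero_of_apol a ha g i _ e he
        apply h
        rw [hS1V]
        exact Submodule.subset_span ⟨i, g.totalDegree + 1, rfl⟩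
      · rw [homogeneousComponent_eq_zero _ _ (by omega), map_zero]

end
end

section
/- Let X = {P_1,...,P_r} ⊂ P^n_k be distinct points with x_n(P_i) = 1 for all i, dual linear forms L_i, socle degree s, and F_t = (1/(t+s−1)!) Σ_{i=1}^r α_i L_i^{t+s−1} with α_i ∈ k^*. Then x_n ∘ F_t = F_{t−1} for all t > 1, and x_n ∘ F_1 = 0 if and only if Σ_{i=1}^r α_i L_i^{s−1} = 0. Moreover, if Σ_{i=1}^r α_i L_i^{s−1} = 0 then HF_X(s−1) < r. -/
open MvPolynomial
open scoped Classical

noncomputable section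

variable {k : Type} [Field k]

lemma apol_X {m : ℕ} (j : Fin m) (F : MvPolynomial (Fin m) k) :
    apol (X j) F = pderiv j F := by
  have hX : (X j : MvPolynomial (Fin m) k) = monomial (Finsupp.single j 1) 1 := rfl
  rw [apol, hX]
  rw [show ((AddMonoidAlgebra.coeff (monomial (Finsupp.single j 1) 1 : MvPolynomial (Fin m) k)).sum
      (fun α c => (AddMonoidAlgebra.coeff F).sum fun β b => if α ≤ β then
        monomial (β - α) (c * b * (β.prod fun i M => ((M.descFactorial (α i) : k)))) else 0))
    = (AddMonoidAlgebra.coeff F).sum fun β b => if Finsupp.single j 1 ≤ β then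
        monomial (β - Finsupp.single j 1)
          (1 * b * (β.prod fun i M => ((M.descFactorial ((Finsupp.single j 1) i) : k)))) else 0
    from ?_]
  · rw [Finsupp.sum]
    conv_rhs => rw [F.as_sum, map_sum]
    refine Finset.sum_congr rfl fun β hβ => ?_
    rw [pderiv_monomial]
    by_cases h : Finsupp.single j 1 ≤ β
    · have hj : 1 ≤ β j := by simpa using (Finsupp.single_le_iff).1 h
      rw [if_pos h]
      congr 1
      rw [one_mul]
      congr 1
      rw [Finsupp.prod]
      rw [Finset.prod_eq_single j
        (fun i _ hij => by simp [Finsupp.single_eq_of_ne' (Ne.symm hij)])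
        (fun hj' => absurd (Finsupp.mem_support_iff.2 (by omega)) hj')]
      simp
    · have hj : β j = 0 := by
        by_contra hc
        exact h (Finsupp.single_le_iff.2 (by omega))
      rw [if_neg h, hj]
      simp
  · refine Finsupp.sum_single_index ?_
    simp only [zero_mul, map_zero, ite_self]
    exact Finset.sum_const_zero

lemma pderiv_dualLin {m : ℕ} (a : Fin (m + 1) → k) :
    pderiv (Fin.last m) (dualLin a) = C (a (Fin.last m)) := by
  rw [dualLin, map_sum]
  rw [Finset.sum_eq_single (Fin.last m)]
  · rw [pderiv_C_mul, pderiv_X_self, mul_one]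
  · intro i _ hi
    rw [pderiv_C_mul, pderiv_X_of_ne (by exact hi), mul_zero]
  · simp

lemma pderiv_famF {m r' : ℕ} [CharZero k] (a : Fin r' → Fin (m + 1) → k)
    (hnorm : ∀ i, a i (Fin.last m) = 1) (α : Fin r' → k) (u t : ℕ) :
    pderiv (Fin.last m) (famF a α u (t + 1)) = famF a α u t := by
  rw [famF, famF, Derivation.map_smul, map_sum]
  have key : ∀ i, pderiv (Fin.last m) (C (α i) * dualLin (a i) ^ (t + 1 + u))
      = C (((t + 1 + u : ℕ) : k)) * (C (α i) * dualLin (a i) ^ (t + u)) := by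
    intro i
    rw [pderiv_C_mul, pderiv_pow, pderiv_dualLin, hnorm, map_one, mul_one]
    rw [show t + 1 + u - 1 = t + u from by omega]
    rw [show ((t + 1 + u : ℕ) : MvPolynomial (Fin (m + 1)) k) = C (((t + 1 + u : ℕ) : k)) from by
      simp]
    ring
  simp_rw [key]
  rw [← Finset.mul_sum, smul_eq_C_mul, smul_eq_C_mul, ← mul_assoc, ← map_mul]
  congr 2
  have h1 : ((t + 1 + u).factorial : k) ≠ 0 := by
    exact_mod_cast Nat.cast_ne_zero.2 (Nat.factorial_ne_zero _)
  have h2 : ((t + u).factorial : k) ≠ 0 := by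
    exact_mod_cast Nat.cast_ne_zero.2 (Nat.factorial_ne_zero _)
  have h3 : (t + 1 + u).factorial = (t + 1 + u) * (t + u).factorial := by
    rw [show t + 1 + u = (t + u) + 1 from by omega, Nat.factorial_succ]
  field_simp
  rw [h3]
  push_cast
  ring

lemma aeval_scale_monomial {m : ℕ} (a : Fin m → k) (β : Fin m →₀ ℕ) (c : k) :
    aeval (fun j => C (a j) * X j) (monomial β c)
      = monomial β (c * ∏ j, a j ^ β j) := by
  rw [aeval_monomial]
  have h1 : (β.prod fun i e => (C (a i) * X i) ^ e)
      = C (β.prod fun i e => a i ^ e) * (β.prod fun i e => (X i : MvPolynomial (Fin m) k) ^ e) := by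
    rw [map_finsuppProd, ← Finsupp.prod_mul]
    exact Finsupp.prod_congr fun i _ => by rw [mul_pow, C_pow]
  rw [h1]
  have h2 : (β.prod fun i e => a i ^ e) = ∏ j, a j ^ β j :=
    Finsupp.prod_fintype _ _ fun i => pow_zero _
  rw [h2, monomial_eq, algebraMap_eq, ← mul_assoc, ← map_mul]

lemma coeff_aeval_scale {m : ℕ} (a : Fin m → k) (p : MvPolynomial (Fin m) k) (β : Fin m →₀ ℕ) :
    coeff β (aeval (fun j => C (a j) * X j) p) = coeff β p * ∏ j, a j ^ β j := by
  conv_lhs => rw [p.as_sum, map_sum]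
  rw [coeff_sum]
  simp_rw [aeval_scale_monomial, coeff_monomial]
  rw [Finset.sum_congr rfl (fun x _ => show
      (if x = β then coeff x p * ∏ j, a j ^ x j else 0)
        = (if x = β then coeff x p * ∏ j, a j ^ β j else 0) from by
    split
    · next h => subst h; rfl
    · rfl)]
  rw [Finset.sum_ite_eq' p.support β (fun v => coeff v p * ∏ j, a j ^ β j)]
  by_cases h : β ∈ p.support
  · rw [if_pos h]
  · rw [if_neg h, MvPolynomial.notMem_support_iff.1 h, zero_mul]

lemma dualLin_pow_eq {m : ℕ} (a : Fin m → k) (d : ℕ) :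
    dualLin a ^ d = aeval (fun j => C (a j) * X j) ((∑ j, X j : MvPolynomial (Fin m) k) ^ d) := by
  rw [map_pow, map_sum]
  simp [dualLin]

lemma coeff_sumX_pow_pos {m : ℕ} (d : ℕ) (β : Fin m →₀ ℕ) (hβ : ∑ i, β i = d) :
    0 < coeff β ((∑ j, X j : MvPolynomial (Fin m) ℕ) ^ d) := by
  induction d generalizing β with
  | zero =>
    have hb : β = 0 := by
      ext i
      exact (Finset.sum_eq_zero_iff.1 hβ) i (Finset.mem_univ i)
    subst hb
    simp
  | succ d ih =>
    obtain ⟨j, hj⟩ : ∃ j, β j ≠ 0 := by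
      by_contra hc
      push_neg at hc
      simp [hc] at hβ
    rw [pow_succ, Finset.mul_sum, coeff_sum]
    refine Finset.sum_pos' (fun i _ => Nat.zero_le _) ⟨j, Finset.mem_univ j, ?_⟩
    rw [coeff_mul_X' β j]
    rw [if_pos (Finsupp.mem_support_iff.2 hj)]
    refine ih _ ?_
    have h1 : ∑ i, (β - Finsupp.single j 1 : Fin m →₀ ℕ) i
        = ∑ i, (β i - (Finsupp.single j 1) i) := by
      refine Finset.sum_congr rfl fun i _ => by rw [Finsupp.tsub_apply]
    rw [h1]
    have e1 : ∑ i, (β i - (Finsupp.single j 1) i)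
        = (β j - 1) + ∑ i ∈ Finset.univ.erase j, β i := by
      rw [← Finset.add_sum_erase _ (fun i => β i - (Finsupp.single j 1) i) (Finset.mem_univ j)]
      congr 1
      · rw [Finsupp.single_eq_same]
      · exact Finset.sum_congr rfl fun i hi => by
          rw [Finsupp.single_eq_of_ne' (fun h => (Finset.mem_erase.1 hi).1 h.symm), Nat.sub_zero]
    have e2 : β j + ∑ i ∈ Finset.univ.erase j, β i = d + 1 := by
      rw [Finset.add_sum_erase _ β (Finset.mem_univ j)]
      exact hβ
    omega

lemma coeff_sumX_pow_cast {m : ℕ} (d : ℕ) (β : Fin m →₀ ℕ) :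
    coeff β ((∑ j, X j : MvPolynomial (Fin m) k) ^ d)
      = ((coeff β ((∑ j, X j : MvPolynomial (Fin m) ℕ) ^ d) : ℕ) : k) := by
  have : ((∑ j, X j : MvPolynomial (Fin m) k) ^ d)
      = map (Nat.castRingHom k) ((∑ j, X j : MvPolynomial (Fin m) ℕ) ^ d) := by
    rw [map_pow, map_sum]
    simp
  rw [this, coeff_map]
  rfl

lemma coeff_dualLin_pow {m : ℕ} (a : Fin m → k) (d : ℕ) (β : Fin m →₀ ℕ) :
    coeff β (dualLin a ^ d)
      = ((coeff β ((∑ j, X j : MvPolynomial (Fin m) ℕ) ^ d) : ℕ) : k) * ∏ j, a j ^ β j := by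
  rw [dualLin_pow_eq, coeff_aeval_scale, coeff_sumX_pow_cast]

lemma isHomog_degree {m d : ℕ} {g : MvPolynomial (Fin m) k} (hg : g.IsHomogeneous d)
    {β : Fin m →₀ ℕ} (hβ : coeff β g ≠ 0) : ∑ i, β i = d := by
  have := hg hβ
  rw [← this]
  simp [Finsupp.weight_apply, Finsupp.sum_fintype]

lemma eval_smul_homog {m d : ℕ} {g : MvPolynomial (Fin m) k} (hg : g.IsHomogeneous d)
    (t : k) (x : Fin m → k) : eval (t • x) g = t ^ d * eval x g := by
  rw [eval_eq', eval_eq', Finset.mul_sum]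
  refine Finset.sum_congr rfl fun β hβ => ?_
  have hdeg : ∑ i, β i = d := isHomog_degree hg (MvPolynomial.mem_support_iff.1 hβ)
  have : ∏ i, (t • x) i ^ β i = t ^ d * ∏ i, x i ^ β i := by
    rw [show ∏ i, (t • x) i ^ β i = ∏ i, (t ^ β i * x i ^ β i) from
      Finset.prod_congr rfl fun i _ => by rw [Pi.smul_apply, smul_eq_mul, mul_pow]]
    rw [Finset.prod_mul_distrib, Finset.prod_pow_eq_pow_sum, hdeg]
  rw [this]
  ring

set_option maxHeartbeats 1000000 in
set_option synthInstance.maxHeartbeats 400000 in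
lemma part3 {n r s : ℕ} [CharZero k] (a : Fin r → Fin (n + 1) → k)
    (hs : IsSocleDegree (projIdeal a) r s) (hs1 : 1 ≤ s)
    (α : Fin r → k) (hα : ∀ i, α i ≠ 0)
    (hSig : (∑ i, C (α i) * dualLin (a i) ^ (s - 1)) = 0) :
    HF (projIdeal a) (s - 1) < r := by
  classical
  -- r is positive
  have hr : 0 < r := by
    by_contra hr0
    push_neg at hr0
    have hr' : r = 0 := by omega
    subst hr'
    have hPI : projIdeal a = ⊤ := by
      rw [projIdeal]
      rw [iInf_of_isEmpty
        (fun i : Fin 0 => ⨅ t : k, RingHom.ker (MvPolynomial.eval (t • a i)))]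
      rw [sInf_empty]
    have h0 : ∀ t, 0 ≤ t → HF (projIdeal a) t = 0 := by
      intro t _
      rw [hPI, HF, Submodule.restrictScalars_top, top_inf_eq, Nat.sub_self]
    have := hs.2 0 h0
    omega
  set d := s - 1 with hd
  -- key pointwise vanishing for each multidegree
  have key : ∀ β : Fin (n + 1) →₀ ℕ, (∑ i, β i = d) →
      ∑ i, α i * ∏ j, a i j ^ β j = 0 := by
    intro β hβ
    have h0 := congrArg (coeff β) hSig
    rw [coeff_sum, coeff_zero] at h0
    simp_rw [coeff_C_mul, coeff_dualLin_pow] at h0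
    set N : k := ((coeff β ((∑ j, X j : MvPolynomial (Fin (n + 1)) ℕ) ^ d) : ℕ) : k) with hN
    have hN0 : N ≠ 0 := Nat.cast_ne_zero.2 (coeff_sumX_pow_pos d β hβ).ne'
    have h1 : N * ∑ i, α i * ∏ j, a i j ^ β j = 0 := by
      rw [Finset.mul_sum, ← h0]
      exact Finset.sum_congr rfl fun i _ => by ring
    exact (mul_eq_zero.1 h1).resolve_left hN0
  -- vanishing of the functional on homogeneous polynomials of degree d
  have keyC : ∀ g : MvPolynomial (Fin (n + 1)) k, g.IsHomogeneous d →
      ∑ i, α i * eval (a i) g = 0 := by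
    intro g hg
    have : ∀ i : Fin r, α i * eval (a i) g
        = ∑ β ∈ g.support, α i * (coeff β g * ∏ j, a i j ^ β j) := by
      intro i
      rw [eval_eq', Finset.mul_sum]
    simp_rw [this]
    rw [Finset.sum_comm]
    refine Finset.sum_eq_zero fun β hβ => ?_
    have hdeg : ∑ j, β j = d := isHomog_degree hg (MvPolynomial.mem_support_iff.1 hβ)
    have h2 : ∑ i, α i * (coeff β g * ∏ j, a i j ^ β j)
        = coeff β g * ∑ i, α i * ∏ j, a i j ^ β j := by
      rw [Finset.mul_sum]
      exact Finset.sum_congr rfl fun i _ => by ring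
    rw [h2, key β hdeg, mul_zero]
  set P := homogeneousSubmodule (Fin (n + 1)) k d with hP
  haveI : FiniteDimensional k P := by
    refine Submodule.finiteDimensional_of_le
      (S₂ := restrictTotalDegree (Fin (n + 1)) k d) ?_
    intro p hp
    rw [mem_restrictTotalDegree]
    exact ((mem_homogeneousSubmodule _ _).1 hp).totalDegree_le
  let ev : P →ₗ[k] (Fin r → k) :=
    { toFun := fun g i => eval (a i) g.1
      map_add' := fun g h => by funext i; simp
      map_smul' := fun c g => by
        funext i
        simp [smul_eq_C_mul] }
  have hker : ∀ g : P, ev g = 0 ↔ (g : MvPolynomial (Fin (n + 1)) k) ∈ projIdeal a := by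
    intro g
    constructor
    · intro h
      rw [projIdeal]
      rw [Ideal.mem_iInf]
      intro i
      rw [Ideal.mem_iInf]
      intro t
      rw [RingHom.mem_ker]
      have hgh : (g : MvPolynomial (Fin (n + 1)) k).IsHomogeneous d :=
        (mem_homogeneousSubmodule _ _).1 g.2
      rw [eval_smul_homog hgh]
      have h0 : eval (a i) (g : MvPolynomial (Fin (n + 1)) k) = 0 := congrFun h i
      rw [h0, mul_zero]
    · intro h
      funext i
      have h1 := (Ideal.mem_iInf.1 h) i
      have h2 := (Ideal.mem_iInf.1 h1) 1
      rw [RingHom.mem_ker, one_smul] at h2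
      exact h2
  have hkerEq : Submodule.comap P.subtype
      (Submodule.restrictScalars k (projIdeal a)) = LinearMap.ker ev := by
    ext g
    rw [Submodule.mem_comap, LinearMap.mem_ker, hker g]
    rfl
  set Q : Submodule k (MvPolynomial (Fin (n + 1)) k) :=
    Submodule.restrictScalars k (projIdeal a) ⊓ P with hQ
  have hcomap : Submodule.comap P.subtype Q = LinearMap.ker ev := by
    rw [hQ, Submodule.comap_inf, hkerEq,
      show Submodule.comap P.subtype P = ⊤ from
        eq_top_iff.2 fun g _ => g.2, inf_top_eq]
  have hfr1 : Module.finrank k Q = Module.finrank k (LinearMap.ker ev) := by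
    rw [← hcomap]
    exact ((Submodule.comapSubtypeEquivOfLe (inf_le_right : Q ≤ P)).finrank_eq).symm
  have hHF : HF (projIdeal a) d = Module.finrank k P - Module.finrank k Q := rfl
  have hrn := LinearMap.finrank_range_add_finrank_ker ev
  -- the functional φ
  let φ : (Fin r → k) →ₗ[k] k := ∑ i, α i • LinearMap.proj i
  have hφ : ∀ v, φ v = ∑ i, α i * v i := by
    intro v
    rw [LinearMap.sum_apply]
    exact Finset.sum_congr rfl fun i _ => rfl
  have hrange : LinearMap.range ev ≤ LinearMap.ker φ := by
    rintro - ⟨g, rfl⟩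
    rw [LinearMap.mem_ker, hφ]
    exact keyC _ ((mem_homogeneousSubmodule _ _).1 g.2)
  have hφtop : LinearMap.ker φ < ⊤ := by
    rw [lt_top_iff_ne_top]
    intro hT
    have i0 : Fin r := ⟨0, hr⟩
    have hmem : Pi.single i0 (1 : k) ∈ LinearMap.ker φ := hT ▸ Submodule.mem_top
    rw [LinearMap.mem_ker, hφ] at hmem
    rw [Finset.sum_eq_single i0 (fun i _ hi => by
        rw [Pi.single_eq_of_ne hi, mul_zero]) (fun h => absurd (Finset.mem_univ i0) h)] at hmem
    rw [Pi.single_eq_same, mul_one] at hmem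
    exact hα i0 hmem
  have hlt : Module.finrank k (LinearMap.ker φ) < r := by
    have := Submodule.finrank_lt (lt_top_iff_ne_top.1 hφtop)
    rwa [Module.finrank_pi, Fintype.card_fin] at this
  have hle : Module.finrank k (LinearMap.range ev) ≤ Module.finrank k (LinearMap.ker φ) :=
    Submodule.finrank_mono hrange
  rw [hHF, hfr1]
  omega


/-- with `u = s−1`, `x_n ∘ F_t = F_{t−1}` for `t > 1`; `x_n ∘ F_1 = 0` iff
`Σ α_i L_i^{s−1} = 0`; and the latter forces `HF_X(s−1) < r`. -/
theorem stmt7 [CharZero k] [IsAlgClosed k] (n r s : ℕ)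
    (a : Fin r → Fin (n + 1) → k) (ha : ProjDistinct a)
    (hnorm : ∀ i, a i (Fin.last n) = 1)
    (hs : IsSocleDegree (projIdeal a) r s) (hs1 : 1 ≤ s)
    (α : Fin r → k) (hα : ∀ i, α i ≠ 0) :
    (∀ t, 2 ≤ t → apol (MvPolynomial.X (Fin.last n)) (famF a α (s - 1) t)
        = famF a α (s - 1) (t - 1))
    ∧ (apol (MvPolynomial.X (Fin.last n)) (famF a α (s - 1) 1) = 0
        ↔ (∑ i, MvPolynomial.C (α i) * dualLin (a i) ^ (s - 1)) = 0)
    ∧ ((∑ i, MvPolynomial.C (α i) * dualLin (a i) ^ (s - 1)) = 0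
        → HF (projIdeal a) (s - 1) < r) := by
  classical
  refine ⟨?_, ?_, ?_⟩
  · intro t ht
    obtain ⟨t', rfl⟩ : ∃ t', t = t' + 1 := ⟨t - 1, by omega⟩
    rw [apol_X, pderiv_famF a hnorm α (s - 1) t']
    rfl
  · have h2 : apol (MvPolynomial.X (Fin.last n)) (famF a α (s - 1) 1)
        = famF a α (s - 1) 0 := by
      rw [apol_X]
      exact pderiv_famF a hnorm α (s - 1) 0
    rw [h2, famF, smul_eq_zero]
    simp only [zero_add]
    constructor
    · rintro (h | h)
      · exact absurd h (inv_ne_zero (Nat.cast_ne_zero.2 (Nat.factorial_ne_zero _)))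
      · exact h
    · exact Or.inr
  · intro hSig
    exact part3 a hs hs1 α hα hSig


end
end

section
/- Let A = R/I be a one-dimensional graded Gorenstein k-algebra of socle degree s and let z ∈ R_1 be a nonzerodivisor on A. Suppose F = {F_l}_{l ∈ N_+} ⊆ I^⊥ satisfies: (1) z ∘ F_l = F_{l−1} for l > 1 and z ∘ F_1 = 0, and (2) deg F_1 = s. Then there exist nonzero scalars α_l ∈ k^* such that F' = {(1/α_l) F_l} is G-admissible with respect to z; in particular F generates I^⊥ as an R-module. -/
open MvPolynomial
open scoped Classical

noncomputable section

variable {k : Type} [Field k]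

lemma descFactorial_add' (n a b : ℕ) :
    n.descFactorial (a + b) = n.descFactorial b * (n - b).descFactorial a := by
  induction a with
  | zero => simp
  | succ a ih =>
      rw [show a + 1 + b = (a + b) + 1 from by ring, Nat.descFactorial_succ, ih,
        Nat.descFactorial_succ]
      rw [show n - (a + b) = n - b - a from by omega]
      ring



lemma prod_descFactorial_add {n : ℕ} (α γ β : Fin n →₀ ℕ) (hγ : γ ≤ β) (hα : α ≤ β - γ) :
    (β.prod fun i m => ((m.descFactorial ((α + γ) i) : k))) =
      (β.prod fun i m => ((m.descFactorial (γ i) : k))) *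
        ((β - γ).prod fun i m => ((m.descFactorial (α i) : k))) := by
  have hsub : (β - γ).support ⊆ β.support := by
    intro i hi
    simp only [Finsupp.mem_support_iff, Finsupp.tsub_apply] at hi ⊢
    omega
  rw [Finsupp.prod, Finsupp.prod, Finsupp.prod]
  rw [Finset.prod_subset hsub (f := fun i => (((β - γ) i).descFactorial (α i) : k))
    (by
      intro i hi hni
      simp only [Finsupp.notMem_support_iff] at hni
      have : α i = 0 := le_antisymm (by simpa [hni] using hα i) (Nat.zero_le _)
      simp [hni, this])]
  rw [← Finset.prod_mul_distrib]
  apply Finset.prod_congr rfl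
  intro i _
  have h1 : (α + γ) i = α i + γ i := rfl
  have h2 : (β - γ) i = β i - γ i := Finsupp.tsub_apply β γ i
  rw [h1, h2, descFactorial_add' (β i) (α i) (γ i)]
  push_cast
  ring



lemma apol_zero_left {n : ℕ} (F : MvPolynomial (Fin n) k) : apol 0 F = 0 := by
  simp [apol]

lemma apol_zero_right {n : ℕ} (f : MvPolynomial (Fin n) k) : apol f 0 = 0 := by
  simp [apol]

lemma apol_add_left {n : ℕ} (f g F : MvPolynomial (Fin n) k) :
    apol (f + g) F = apol f F + apol g F := by
  unfold apol
  apply Finsupp.sum_add_index'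
  · intro α; simp
  · intro α c c'
    rw [← Finsupp.sum_add]
    congr 1; funext β b
    split <;> simp [add_mul, map_add]

lemma apol_add_right {n : ℕ} (f F G : MvPolynomial (Fin n) k) :
    apol f (F + G) = apol f F + apol f G := by
  unfold apol
  rw [← Finsupp.sum_add]
  congr 1; funext α c
  apply Finsupp.sum_add_index'
  · intro β; split <;> simp
  · intro β b b'
    split <;> simp [mul_add, add_mul, map_add]



lemma apol_monomial_monomial {n : ℕ} (α β : Fin n →₀ ℕ) (c b : k) :
    apol (monomial α c) (monomial β b) =
      if α ≤ β then
        monomial (β - α) (c * b * (β.prod fun i m => ((m.descFactorial (α i) : k))))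
      else 0 := by
  unfold apol
  rw [MvPolynomial.sum_monomial_eq (Finset.sum_eq_zero fun β' _ => by simp only []; split <;> simp),
    MvPolynomial.sum_monomial_eq (by split <;> simp)]

lemma apol_mul {n : ℕ} (f g F : MvPolynomial (Fin n) k) :
    apol (f * g) F = apol f (apol g F) := by
  induction F using MvPolynomial.induction_on' with
  | add F G hF hG => rw [apol_add_right, apol_add_right, hF, hG, ← apol_add_right]
  | monomial β b =>
      induction g using MvPolynomial.induction_on' with
      | add g1 g2 h1 h2 =>
          rw [mul_add, apol_add_left, h1, h2, apol_add_left g1 g2, apol_add_right]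
      | monomial γ d =>
          induction f using MvPolynomial.induction_on' with
          | add f1 f2 h1 h2 =>
              rw [add_mul, apol_add_left, apol_add_left, h1, h2]
          | monomial α c =>
              rw [monomial_mul, apol_monomial_monomial,
                apol_monomial_monomial γ β d b]
              by_cases hγ : γ ≤ β
              · rw [if_pos hγ, apol_monomial_monomial]
                by_cases hα : α ≤ β - γ
                · rw [if_pos hα, if_pos (show α + γ ≤ β by
                    calc α + γ ≤ (β - γ) + γ := add_le_add_left hα γ
                    _ = β := tsub_add_cancel_of_le hγ)]
                  rw [show β - (α + γ) = β - γ - α from by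
                    rw [add_comm α γ, tsub_add_eq_tsub_tsub]]
                  rw [prod_descFactorial_add α γ β hγ hα]
                  ring_nf
                · rw [if_neg hα, if_neg (fun h => hα (le_tsub_of_add_le_right h))]
              · rw [if_neg hγ, apol_zero_right,
                  if_neg (fun h => hγ (le_trans le_add_self h))]

lemma apol_C {n : ℕ} (c : k) (F : MvPolynomial (Fin n) k) : apol (C c) F = c • F := by
  have h : apol (C c) F = ∑ β ∈ F.support, monomial β (c * coeff β F) := by
    unfold apol
    rw [show (C c : MvPolynomial (Fin n) k) = monomial 0 c from rfl,
      MvPolynomial.sum_monomial_eq (Finset.sum_eq_zero fun β' _ => by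
        simp only []; split <;> simp)]
    apply Finset.sum_congr rfl
    intro β _
    simp only []
    rw [if_pos (zero_le (a := β)), tsub_zero]
    congr 1
    rw [show (β.prod fun i m => ((m.descFactorial ((0 : Fin n →₀ ℕ) i) : k))) = 1 from by
      simp [Finsupp.prod], mul_one]
    rfl
  rw [h]
  calc ∑ β ∈ F.support, monomial β (c * coeff β F)
      = ∑ β ∈ F.support, c • monomial β (coeff β F) := by
        simp [MvPolynomial.smul_monomial]
    _ = c • ∑ β ∈ F.support, monomial β (coeff β F) := (Finset.smul_sum).symm
    _ = c • F := by rw [support_sum_monomial_coeff]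

lemma apol_one {n : ℕ} (F : MvPolynomial (Fin n) k) : apol 1 F = F := by
  rw [show (1 : MvPolynomial (Fin n) k) = C 1 from rfl, apol_C, one_smul]

lemma apol_smul_left {n : ℕ} (c : k) (f F : MvPolynomial (Fin n) k) :
    apol (c • f) F = c • apol f F := by
  rw [show c • f = C c * f from (MvPolynomial.smul_eq_C_mul f c).symm ▸ rfl, apol_mul, apol_C]

lemma apol_smul_right {n : ℕ} (c : k) (f F : MvPolynomial (Fin n) k) :
    apol f (c • F) = c • apol f F := by
  rw [← apol_C, ← apol_mul, mul_comm, apol_mul, apol_C]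

lemma exists_of_mem_support_apol {n : ℕ} {f F : MvPolynomial (Fin n) k} {m : Fin n →₀ ℕ}
    (hm : m ∈ (apol f F).support) :
    ∃ α ∈ f.support, ∃ β ∈ F.support, α ≤ β ∧ m = β - α := by
  unfold apol at hm
  rw [Finsupp.sum] at hm
  have h1 := MvPolynomial.support_sum hm
  rw [Finset.mem_biUnion] at h1
  obtain ⟨α, hα, hm2⟩ := h1
  rw [Finsupp.sum] at hm2
  have h2 := MvPolynomial.support_sum hm2
  rw [Finset.mem_biUnion] at h2
  obtain ⟨β, hβ, hm3⟩ := h2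
  refine ⟨α, hα, β, hβ, ?_⟩
  by_cases hle : α ≤ β
  · rw [if_pos hle] at hm3
    have := MvPolynomial.support_monomial_subset hm3
    rw [Finset.mem_singleton] at this
    exact ⟨hle, this⟩
  · rw [if_neg hle] at hm3
    simp at hm3

lemma degree_lt_of_mem_support_apol {n : ℕ} {f F : MvPolynomial (Fin n) k} {m : Fin n →₀ ℕ}
    (hf : constantCoeff f = 0) (hm : m ∈ (apol f F).support) :
    (m.sum fun _ e => e) + 1 ≤ F.totalDegree := by
  obtain ⟨α, hα, β, hβ, hle, rfl⟩ := exists_of_mem_support_apol hm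
  have hα0 : α ≠ 0 := by
    rintro rfl
    rw [MvPolynomial.mem_support_iff] at hα
    exact hα (by rw [show coeff (0 : Fin n →₀ ℕ) f = constantCoeff f from congrFun MvPolynomial.constantCoeff_eq.symm f]; exact hf)
  have hsum : ((β - α).sum fun _ e => e) + (α.sum fun _ e => e) = β.sum fun _ e => e := by
    rw [← Finsupp.sum_add_index' (fun _ => rfl) (fun _ _ _ => rfl), tsub_add_cancel_of_le hle]
  have hα1 : 1 ≤ α.sum fun _ e => e := by
    by_contra h
    push_neg at h
    apply hα0
    have h0 : (α.sum fun _ e => e) = 0 := Nat.lt_one_iff.mp h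
    rw [Finsupp.sum] at h0
    have := Finset.sum_eq_zero_iff.mp h0
    ext i
    by_cases hi : i ∈ α.support
    · exact this i hi
    · simpa using Finsupp.notMem_support_iff.mp hi
  have := MvPolynomial.le_totalDegree hβ
  omega

lemma totalDegree_apol_le {n : ℕ} (f F : MvPolynomial (Fin n) k) :
    (apol f F).totalDegree ≤ F.totalDegree := by
  apply Finset.sup_le
  intro m hm
  obtain ⟨α, _, β, hβ, hle, rfl⟩ := exists_of_mem_support_apol hm
  have hsum : ((β - α).sum fun _ e => e) ≤ β.sum fun _ e => e := by
    have : ((β - α).sum fun _ e => e) + (α.sum fun _ e => e) = β.sum fun _ e => e := by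
      rw [← Finsupp.sum_add_index' (fun _ => rfl) (fun _ _ _ => rfl), tsub_add_cancel_of_le hle]
    omega
  exact le_trans hsum (MvPolynomial.le_totalDegree hβ)

lemma apol_pow_eq_zero {n : ℕ} {f : MvPolynomial (Fin n) k} (hf : constantCoeff f = 0) :
    ∀ (d : ℕ) (H : MvPolynomial (Fin n) k), H.totalDegree ≤ d → apol (f ^ (d + 1)) H = 0 := by
  intro d
  induction d with
  | zero =>
      intro H hH
      rw [pow_one]
      rw [← MvPolynomial.support_eq_empty, Finset.eq_empty_iff_forall_notMem]
      intro m hm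
      have := degree_lt_of_mem_support_apol hf hm
      omega
  | succ d ih =>
      intro H hH
      rw [pow_succ, apol_mul]
      by_cases h0 : apol f H = 0
      · rw [h0, apol_zero_right]
      · apply ih
        apply Finset.sup_le
        intro m hm
        have := degree_lt_of_mem_support_apol hf hm
        omega

lemma exists_apol_inverse {n : ℕ} (g H : MvPolynomial (Fin n) k)
    (hc : constantCoeff g ≠ 0) : ∃ p, apol p (apol g H) = H := by
  set c := constantCoeff g with hcdef
  set N := g - C c with hN
  have hN0 : constantCoeff N = 0 := by
    simp [hN, c]
  have key : ∀ d : ℕ, ∃ p e : _, p * g = 1 + C (e : k) * N ^ (d + 1) := by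
    intro d
    induction d with
    | zero =>
        refine ⟨C c⁻¹, c⁻¹, ?_⟩
        have hg : g = C c + N := by rw [hN]; ring
        rw [hg, pow_one, mul_add, ← C_mul, inv_mul_cancel₀ hc, C_1]
    | succ d ih =>
        obtain ⟨p, e, hp⟩ := ih
        refine ⟨p - C (e * c⁻¹) * N ^ (d + 1), -(e * c⁻¹), ?_⟩
        have hg : g = C c + N := by rw [hN]; ring
        calc (p - C (e * c⁻¹) * N ^ (d + 1)) * g
            = p * g - C (e * c⁻¹) * N ^ (d + 1) * (C c + N) := by rw [← hg]; ring
          _ = 1 + C e * N ^ (d + 1) - C (e * c⁻¹) * C c * N ^ (d + 1)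
              - C (e * c⁻¹) * N ^ (d + 2) := by rw [hp]; ring
          _ = 1 + C (-(e * c⁻¹)) * N ^ (d + 2) := by
              rw [← C_mul, mul_assoc, inv_mul_cancel₀ hc, mul_one]
              rw [map_neg]
              ring
  obtain ⟨p, e, hp⟩ := key H.totalDegree
  refine ⟨p, ?_⟩
  rw [← apol_mul, hp, apol_add_left, apol_one, apol_mul, apol_pow_eq_zero hN0 _ H le_rfl,
    apol_zero_right, add_zero]


def apolR {n : ℕ} (F : MvPolynomial (Fin n) k) :
    MvPolynomial (Fin n) k →ₗ[k] MvPolynomial (Fin n) k where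
  toFun g := apol g F
  map_add' f g := apol_add_left f g F
  map_smul' c f := apol_smul_left c f F

lemma mem_Rspan_singleton {n : ℕ} {F G : MvPolynomial (Fin n) k} :
    G ∈ (Rspan {F} : Submodule k (MvPolynomial (Fin n) k)) ↔ ∃ g, G = apol g F := by
  unfold Rspan
  have hset : {G | ∃ g, ∃ F' ∈ ({F} : Set (MvPolynomial (Fin n) k)), G = apol g F'}
      = Set.range (apolR F) := by
    ext G'
    constructor
    · rintro ⟨g, F', hF', rfl⟩
      rw [Set.mem_singleton_iff] at hF'
      exact ⟨g, by rw [hF']; rfl⟩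
    · rintro ⟨g, rfl⟩
      exact ⟨g, F, rfl, rfl⟩
  rw [hset, ← LinearMap.coe_range, Submodule.span_eq, LinearMap.mem_range]
  constructor
  · rintro ⟨g, rfl⟩; exact ⟨g, rfl⟩
  · rintro ⟨g, rfl⟩; exact ⟨g, rfl⟩


/-- for a one-dimensional graded Gorenstein algebra `R/I` (given via its
G-admissible structure system `{H_l}` with `⟨H_l⟩ = (I+(z^l))^⊥` and `deg H_1 = s`),
any family `{F_l} ⊆ I^⊥` with `z ∘ F_{l+1} = F_l`, `z ∘ F_1 = 0` and `deg F_1 = s` is,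
up to nonzero scalars, G-admissible; in particular it generates `I^⊥`. -/
theorem stmt11 [CharZero k] (n s : ℕ)
    (I : Ideal (MvPolynomial (Fin (n + 1)) k))
    (z : MvPolynomial (Fin (n + 1)) k) (hz1 : z.IsHomogeneous 1)
    (hznzd : ∀ f, z * f ∈ I → f ∈ I)
    (H : ℕ → MvPolynomial (Fin (n + 1)) k)
    (hH : GAdmissible z H)
    (hHgen : perp (I : Set (MvPolynomial (Fin (n + 1)) k))
      = ((Rspan (Set.range H) : Submodule k (MvPolynomial (Fin (n + 1)) k)) : Set (MvPolynomial (Fin (n + 1)) k)))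
    (hHl : ∀ l : ℕ,
      ((Rspan {H l} : Submodule k (MvPolynomial (Fin (n + 1)) k)) : Set (MvPolynomial (Fin (n + 1)) k))
        = perp ((I ⊔ Ideal.span {z ^ (l + 1)} : Ideal (MvPolynomial (Fin (n + 1)) k)) : Set (MvPolynomial (Fin (n + 1)) k)))
    (hHdeg : (H 0).totalDegree = s ∧ H 0 ≠ 0)
    (F : ℕ → MvPolynomial (Fin (n + 1)) k)
    (hFin : ∀ l, F l ∈ perp (I : Set (MvPolynomial (Fin (n + 1)) k)))
    (hF1 : apol z (F 0) = 0) (hFl : ∀ l, apol z (F (l + 1)) = F l)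
    (hFdeg : (F 0).totalDegree = s ∧ F 0 ≠ 0) :
    ∃ αf : ℕ → k, (∀ l, αf l ≠ 0)
      ∧ GAdmissible z (fun l => (αf l)⁻¹ • F l)
      ∧ perp (I : Set (MvPolynomial (Fin (n + 1)) k))
          = ((Rspan (Set.range F) :
              Submodule k (MvPolynomial (Fin (n + 1)) k)) : Set (MvPolynomial (Fin (n + 1)) k)) := by

  classical
  -- iterated apolarity by powers of z
  have famZF : ∀ j m, apol (z ^ j) (F (j + m)) = F m := by
    intro j
    induction j with
    | zero => intro m; rw [pow_zero, Nat.zero_add, apol_one]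
    | succ j ih =>
        intro m
        have hidx : j + 1 + m = (j + m) + 1 := by omega
        rw [hidx, pow_succ, apol_mul, hFl (j + m)]
        exact ih m
  have famZH : ∀ j m, apol (z ^ j) (H (j + m)) = H m := by
    intro j
    induction j with
    | zero => intro m; rw [pow_zero, Nat.zero_add, apol_one]
    | succ j ih =>
        intro m
        have hidx : j + 1 + m = (j + m) + 1 := by omega
        rw [hidx, pow_succ, apol_mul, hH.2.1 (j + m)]
        exact ih m
  have hzF0 : ∀ l, apol (z ^ (l + 1)) (F l) = 0 := by
    intro l
    rw [pow_succ, mul_comm, apol_mul]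
    have : apol (z ^ l) (F l) = F 0 := famZF l 0
    rw [this, hF1]
  -- each F l lies in Rspan {H l}
  have hFmem : ∀ l, ∃ q, F l = apol q (H l) := by
    intro l
    rw [← mem_Rspan_singleton]
    have : F l ∈ perp ((I ⊔ Ideal.span {z ^ (l + 1)} : Ideal (MvPolynomial (Fin (n + 1)) k)) :
        Set (MvPolynomial (Fin (n + 1)) k)) := by
      intro g hg
      obtain ⟨a, ha, b, hb, rfl⟩ := Submodule.mem_sup.mp hg
      obtain ⟨r, rfl⟩ := Ideal.mem_span_singleton'.mp hb
      rw [apol_add_left, hFin l a ha, apol_mul, hzF0 l, apol_zero_right, add_zero]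
    rw [← hHl l] at this
    exact this
  choose q hq using hFmem
  -- F 0 = apol (q l) (H 0) for every l
  have hq0 : ∀ l, F 0 = apol (q l) (H 0) := by
    intro l
    have h1 : F 0 = apol (z ^ l) (F l) := (famZF l 0).symm
    have h2 : apol (z ^ l) (H l) = H 0 := famZH l 0
    rw [h1, hq l, ← apol_mul, mul_comm, apol_mul, h2]
  -- the constant coefficient of each q l is nonzero
  have hc : ∀ l, constantCoeff (q l) ≠ 0 := by
    intro l
    set c := constantCoeff (q l) with hcdef
    obtain ⟨m, hm, hms⟩ := Finset.exists_mem_eq_sup (F 0).support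
      (MvPolynomial.support_nonempty.mpr hFdeg.2) (fun m => m.sum fun _ e => e)
    have hmdeg : (m.sum fun _ e => e) = s := by
      rw [← hFdeg.1]; exact hms.symm
    have hcoef : coeff m (F 0) ≠ 0 := MvPolynomial.mem_support_iff.mp hm
    have hsplit : F 0 = c • H 0 + apol (q l - C c) (H 0) := by
      rw [← apol_C, ← apol_add_left]
      rw [show C c + (q l - C c) = q l from by ring]
      exact hq0 l
    have hN0 : constantCoeff (q l - C c) = 0 := by simp [hcdef]
    have hzero : coeff m (apol (q l - C c) (H 0)) = 0 := by
      by_contra h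
      have := degree_lt_of_mem_support_apol hN0 (MvPolynomial.mem_support_iff.mpr h)
      rw [hHdeg.1, hmdeg] at this
      omega
    intro hc0
    apply hcoef
    rw [hsplit, MvPolynomial.coeff_add, hzero, add_zero, MvPolynomial.coeff_smul, hc0, zero_smul]
  -- inverses: H l = apol (p l) (F l)
  have hHmem : ∀ l, ∃ p, H l = apol p (F l) := by
    intro l
    obtain ⟨p, hp⟩ := exists_apol_inverse (q l) (H l) (hc l)
    exact ⟨p, by rw [hq l, hp]⟩
  choose p hp using hHmem
  -- q (l+1) applied to H l gives F l
  have hqdown : ∀ l, apol (q (l + 1)) (H l) = F l := by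
    intro l
    rw [← hH.2.1 l, ← apol_mul, mul_comm, apol_mul, ← hq (l + 1), hFl l]
  -- Rspan {H 0} ⊆ Rspan {F 0}
  have hRspan0 : ∀ G, G ∈ (Rspan {H 0} : Submodule k (MvPolynomial (Fin (n + 1)) k)) →
      G ∈ (Rspan {F 0} : Submodule k (MvPolynomial (Fin (n + 1)) k)) := by
    intro G hG
    obtain ⟨r, rfl⟩ := mem_Rspan_singleton.mp hG
    exact mem_Rspan_singleton.mpr ⟨r * p 0, by rw [apol_mul, ← hp 0]⟩
  refine ⟨fun _ => 1, fun _ => one_ne_zero, ?_, ?_⟩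
  · simp only [inv_one, one_smul]
    refine ⟨hF1, hFl, ?_⟩
    intro l
    ext G
    constructor
    · rintro ⟨g, hg, rfl⟩
      simp only [Set.mem_setOf_eq] at hg
      -- g * q (l+1) annihilates Rspan {H l}
      have hann : ∀ G' ∈ (Rspan {H l} : Submodule k (MvPolynomial (Fin (n + 1)) k)),
          apol (g * q (l + 1)) G' = 0 := by
        intro G' hG'
        obtain ⟨r, rfl⟩ := mem_Rspan_singleton.mp hG'
        rw [← apol_mul, show g * q (l + 1) * r = g * (r * q (l + 1)) from by ring,
          apol_mul, apol_mul, hqdown l]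
        exact hg _ (mem_Rspan_singleton.mpr ⟨r, rfl⟩)
      have himg : apol (g * q (l + 1)) (H (l + 1)) ∈
          ((Rspan {H 0} : Submodule k (MvPolynomial (Fin (n + 1)) k)) :
            Set (MvPolynomial (Fin (n + 1)) k)) := by
        rw [← hH.2.2 l]
        exact ⟨g * q (l + 1), hann, rfl⟩
      have heq : apol g (F (l + 1)) = apol (g * q (l + 1)) (H (l + 1)) := by
        rw [apol_mul, ← hq (l + 1)]
      show apol g (F (l + 1)) ∈
        ((Rspan {F 0} : Submodule k (MvPolynomial (Fin (n + 1)) k)) :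
          Set (MvPolynomial (Fin (n + 1)) k))
      rw [heq]
      exact hRspan0 _ himg
    · intro hG
      obtain ⟨r, rfl⟩ := mem_Rspan_singleton.mp hG
      refine ⟨r * z ^ (l + 1), ?_, ?_⟩
      · intro G' hG'
        obtain ⟨t, rfl⟩ := mem_Rspan_singleton.mp hG'
        rw [← apol_mul, show r * z ^ (l + 1) * t = r * t * z ^ (l + 1) from by ring,
          apol_mul, hzF0 l, apol_zero_right]
      · show apol (r * z ^ (l + 1)) (F (l + 1)) = apol r (F 0)
        have h3 : apol (z ^ (l + 1)) (F (l + 1)) = F 0 := famZF (l + 1) 0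
        rw [apol_mul, h3]
  · apply Set.Subset.antisymm
    · rw [hHgen]
      intro x hx
      have : (Rspan (Set.range H) : Submodule k (MvPolynomial (Fin (n + 1)) k)) ≤
          Rspan (Set.range F) := by
        unfold Rspan
        apply Submodule.span_le.mpr
        rintro G ⟨g, F', ⟨l, rfl⟩, rfl⟩
        apply Submodule.subset_span
        exact ⟨g * p l, F l, ⟨l, rfl⟩, by rw [apol_mul, ← hp l]⟩
      exact this hx
    · intro G hG
      have : ∀ G' ∈ (Rspan (Set.range F) : Submodule k (MvPolynomial (Fin (n + 1)) k)),
          G' ∈ perp (I : Set (MvPolynomial (Fin (n + 1)) k)) := by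
        intro G' hG'
        induction hG' using Submodule.span_induction with
        | mem x hx =>
            obtain ⟨g, F', ⟨l, rfl⟩, rfl⟩ := hx
            intro a ha
            rw [← apol_mul]
            exact hFin l (a * g) (Ideal.mul_mem_right g I ha)
        | zero => intro a _; exact apol_zero_right a
        | add x y _ _ hx hy =>
            intro a ha
            rw [apol_add_right, hx a ha, hy a ha, add_zero]
        | smul c x _ hx =>
            intro a ha
            rw [apol_smul_right, hx a ha, smul_zero]
      exact this G hG


end
end

section
/- Let Y ⊂ P^n_k (n > 3) be a set of 2n+1 generic points, whose defining ideal I(Y) is generated by quadrics and has Hilbert function HF_Y(2) = 2n+1. Then for no point P ∈ P^n_k is X = Y ∪ {P} arithmetically Gorenstein: indeed, the symmetry of the h-vector would force HF_X(2) = HF_Y(2) = 2n+1, hence I(X)_2 = I(Y)_2, contradicting I(Y) ⊋ I(X) with I(Y) generated in degree 2. -/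
open MvPolynomial
open scoped Classical

noncomputable section

variable {k : Type} [Field k]

namespace Stmt14Aux

/-- product of descending factorials -/
def Dk {n : ℕ} (α β : Fin n →₀ ℕ) : ℕ := ∏ i, (β i).descFactorial (α i)

lemma Dk_eq_zero {n : ℕ} {α β : Fin n →₀ ℕ} (h : ¬ α ≤ β) : Dk α β = 0 := by
  rw [Finsupp.le_def] at h
  push_neg at h
  obtain ⟨i, hi⟩ := h
  exact Finset.prod_eq_zero (Finset.mem_univ i)
    ((Nat.descFactorial_eq_zero_iff_lt).2 hi)

lemma Dk_self {n : ℕ} (α : Fin n →₀ ℕ) : Dk α α = ∏ i, (α i).factorial := by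
  simp [Dk, Nat.descFactorial_self]

lemma descFactorial_add (m a b : ℕ) :
    m.descFactorial (a + b) = m.descFactorial b * (m - b).descFactorial a := by
  induction a with
  | zero => simp
  | succ a ih =>
      have : a + 1 + b = (a + b) + 1 := by omega
      rw [this, Nat.descFactorial_succ, ih, Nat.descFactorial_succ]
      have : m - (a + b) = m - b - a := by omega
      rw [this]; ring

lemma Dk_add {n : ℕ} (α α' γ : Fin n →₀ ℕ) :
    Dk (α + α') γ = Dk α' γ * Dk α (γ - α') := by
  rw [Dk, Dk, Dk, ← Finset.prod_mul_distrib]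
  refine Finset.prod_congr rfl fun i _ => ?_
  rw [Finsupp.add_apply, Finsupp.tsub_apply, descFactorial_add]

variable {N : ℕ}

/-- apolarity as a bilinear map -/
def apolB : MvPolynomial (Fin N) k →ₗ[k] MvPolynomial (Fin N) k →ₗ[k] MvPolynomial (Fin N) k :=
  (basisMonomials (Fin N) k).constr k fun α =>
    (basisMonomials (Fin N) k).constr k fun β =>
      monomial (β - α) ((Dk α β : k))

lemma apolB_monomial_one (α β : Fin N →₀ ℕ) :
    apolB (monomial α (1:k)) (monomial β (1:k)) = monomial (β - α) ((Dk α β : k)) := by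
  have h1 : (monomial α (1:k)) = basisMonomials (Fin N) k α := by simp
  have h2 : (monomial β (1:k)) = basisMonomials (Fin N) k β := by simp
  rw [apolB, h1, h2, Module.Basis.constr_basis, Module.Basis.constr_basis]

lemma apolB_monomial (α β : Fin N →₀ ℕ) (c b : k) :
    apolB (monomial α c) (monomial β b) = monomial (β - α) (c * b * (Dk α β : k)) := by
  have hc : (monomial α c) = c • monomial α (1:k) := by rw [smul_monomial, smul_eq_mul, mul_one]
  have hb : (monomial β b) = b • monomial β (1:k) := by rw [smul_monomial, smul_eq_mul, mul_one]
  rw [hc, hb, map_smul, map_smul, LinearMap.smul_apply, apolB_monomial_one,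
    smul_monomial, smul_monomial, smul_eq_mul, smul_eq_mul]
  ring_nf

lemma apol_eq_apolB (f F : MvPolynomial (Fin N) k) : apol f F = apolB f F := by
  unfold apol
  show (Finsupp.sum (AddMonoidAlgebra.coeff f) fun α c => Finsupp.sum (AddMonoidAlgebra.coeff F) _) = _
  rw [apolB]
  rw [Module.Basis.constr_apply]
  have hrepr : ∀ p : MvPolynomial (Fin N) k, (basisMonomials (Fin N) k).repr p = AddMonoidAlgebra.coeff p :=
    fun p => rfl
  rw [hrepr, LinearMap.finsupp_sum_apply]
  refine Finsupp.sum_congr fun α hα => ?_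
  rw [LinearMap.smul_apply, Module.Basis.constr_apply, hrepr, Finsupp.smul_sum]
  refine Finsupp.sum_congr fun β hβ => ?_
  by_cases h : α ≤ β
  · rw [if_pos h, smul_smul, smul_monomial]
    congr 1
    have : (β.prod fun i m => ((m.descFactorial (α i) : k))) = ((Dk α β : k)) := by
      rw [Dk, Nat.cast_prod, Finsupp.prod]
      refine Finset.prod_subset (Finset.subset_univ _) fun i _ hi => ?_
      have h1 : β i = 0 := Finsupp.notMem_support_iff.1 hi
      have h2 : α i = 0 := le_antisymm (h1 ▸ h i) (Nat.zero_le _)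
      rw [h1, h2]; simp
    rw [this, smul_eq_mul]
  · rw [if_neg h, Dk_eq_zero h]
    norm_num

lemma apolB_apply (f F : MvPolynomial (Fin N) k) :
    apolB f F = ∑ α ∈ f.support, ∑ β ∈ F.support,
      monomial (β - α) (coeff α f * coeff β F * (Dk α β : k)) := by
  conv_lhs => rw [f.as_sum]
  rw [map_sum, LinearMap.sum_apply]
  refine Finset.sum_congr rfl fun α hα => ?_
  conv_lhs => rw [F.as_sum]
  rw [map_sum]
  exact Finset.sum_congr rfl fun β hβ => apolB_monomial ..

lemma apolB_mul (f g F : MvPolynomial (Fin N) k) :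
    apolB (f * g) F = apolB f (apolB g F) := by
  have key : ∀ (α α' β : Fin N →₀ ℕ) (c c' b : k),
      apolB (monomial α c * monomial α' c') (monomial β b)
        = apolB (monomial α c) (apolB (monomial α' c') (monomial β b)) := by
    intro α α' β c c' b
    rw [monomial_mul, apolB_monomial, apolB_monomial, apolB_monomial]
    rw [show β - α' - α = β - (α + α') by rw [tsub_tsub, add_comm], Dk_add]
    push_cast
    ring
  induction f using MvPolynomial.induction_on' with
  | add f1 f2 h1 h2 => simp only [add_mul, map_add, LinearMap.add_apply, h1, h2]
  | monomial α c =>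
    induction g using MvPolynomial.induction_on' with
    | add g1 g2 h1 h2 => simp only [mul_add, map_add, LinearMap.add_apply, h1, h2]
    | monomial α' c' =>
      induction F using MvPolynomial.induction_on' with
      | add F1 F2 h1 h2 => simp only [map_add, h1, h2]
      | monomial β b => exact key α α' β c c' b

lemma apolB_C (c : k) (F : MvPolynomial (Fin N) k) : apolB (C c) F = c • F := by
  rw [show (C c : MvPolynomial (Fin N) k) = monomial 0 c from rfl]
  conv_lhs => rw [F.as_sum]
  rw [map_sum]
  conv_rhs => rw [F.as_sum, Finset.smul_sum]
  refine Finset.sum_congr rfl fun β hβ => ?_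
  rw [apolB_monomial, smul_monomial]
  have : Dk (0 : Fin N →₀ ℕ) β = 1 := by simp [Dk]
  rw [this, tsub_zero, smul_eq_mul]
  push_cast; ring_nf

lemma apolB_one (F : MvPolynomial (Fin N) k) : apolB 1 F = F := by
  rw [show (1 : MvPolynomial (Fin N) k) = C 1 from rfl, apolB_C, one_smul]



lemma degree_add (α β : Fin N →₀ ℕ) : (α + β).degree = α.degree + β.degree := by
  simp only [Finsupp.degree_eq_weight_one, map_add]

lemma degree_le_of_le {α β : Fin N →₀ ℕ} (h : α ≤ β) : α.degree ≤ β.degree := by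
  have := tsub_add_cancel_of_le h
  have h2 := degree_add (β - α) α
  rw [this] at h2
  omega

lemma degree_tsub_of_le {α β : Fin N →₀ ℕ} (h : α ≤ β) :
    (β - α).degree = β.degree - α.degree := by
  have := tsub_add_cancel_of_le h
  have h2 := degree_add (β - α) α
  rw [this] at h2
  omega

lemma degree_of_mem_support {f : MvPolynomial (Fin N) k} {d : ℕ} {α : Fin N →₀ ℕ}
    (hf : f.IsHomogeneous d) (h : α ∈ f.support) : α.degree = d := by
  by_contra hne
  exact (mem_support_iff.1 h) (hf.coeff_eq_zero hne)

lemma degree_one_eq_single {α : Fin N →₀ ℕ} (h : α.degree = 1) :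
    ∃ j, α = Finsupp.single j 1 := by
  have hne : α ≠ 0 := by
    intro h0; rw [h0, map_zero] at h; omega
  obtain ⟨j, hj⟩ := Finsupp.ne_iff.1 hne
  rw [Finsupp.zero_apply] at hj
  have hle := Finsupp.le_degree j α
  have hj1 : α j = 1 := by omega
  refine ⟨j, ?_⟩
  ext i
  rcases eq_or_ne i j with rfl | hij
  · simp [hj1]
  · rw [Finsupp.single_eq_of_ne' (Ne.symm hij)]
    by_contra hzero
    -- α i ≥ 1 and α j = 1 gives degree ≥ 2
    have hi : α i ≠ 0 := hzero
    have h2 : α i + α j ≤ α.degree := by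
      have hsub : {i, j} ⊆ α.support := by
        intro x hx
        simp only [Finset.mem_insert, Finset.mem_singleton] at hx
        rcases hx with rfl | rfl
        · exact Finsupp.mem_support_iff.2 hi
        · exact Finsupp.mem_support_iff.2 (by omega)
      calc α i + α j = ∑ x ∈ {i, j}, α x := by rw [Finset.sum_pair hij]
      _ ≤ _ := Finset.sum_le_sum_of_subset hsub
    omega


lemma apolB_isHomogeneous {f F : MvPolynomial (Fin N) k} {d e : ℕ}
    (hf : f.IsHomogeneous d) (hF : F.IsHomogeneous e) :
    (apolB f F).IsHomogeneous (e - d) := by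
  rw [← mem_homogeneousSubmodule, apolB_apply]
  refine Submodule.sum_mem _ fun α hα => Submodule.sum_mem _ fun β hβ => ?_
  by_cases h : α ≤ β
  · rw [mem_homogeneousSubmodule]
    refine isHomogeneous_monomial _ ?_
    rw [degree_tsub_of_le h, degree_of_mem_support hf hα, degree_of_mem_support hF hβ]
  · rw [Dk_eq_zero h]
    push_cast
    rw [mul_zero, monomial_zero]
    exact Submodule.zero_mem _

lemma apolB_eq_zero_of_lt {f F : MvPolynomial (Fin N) k} {d e : ℕ}
    (hf : f.IsHomogeneous d) (hF : F.IsHomogeneous e) (h : e < d) :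
    apolB f F = 0 := by
  rw [apolB_apply]
  refine Finset.sum_eq_zero fun α hα => Finset.sum_eq_zero fun β hβ => ?_
  have hd : α.degree = d := degree_of_mem_support hf hα
  have he : β.degree = e := degree_of_mem_support hF hβ
  have : ¬ α ≤ β := fun hle => by have := degree_le_of_le hle; omega
  rw [Dk_eq_zero this]
  push_cast
  rw [mul_zero, monomial_zero]

lemma coeff_zero_apolB_monomial (α : Fin N →₀ ℕ) (F : MvPolynomial (Fin N) k) :
    coeff 0 (apolB (monomial α (1:k)) F) = ((∏ i, (α i).factorial : ℕ) : k) * coeff α F := by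
  rw [apolB_apply]
  rw [support_monomial, if_neg (one_ne_zero)]
  rw [Finset.sum_singleton]
  rw [coeff_sum]
  have key : ∀ β ∈ F.support,
      coeff 0 ((monomial (β - α)) (coeff α (monomial α (1:k)) * coeff β F * (Dk α β : k)))
        = if β = α then ((∏ i, (α i).factorial : ℕ) : k) * coeff α F else 0 := by
    intro β hβ
    rcases eq_or_ne β α with rfl | hne
    · rw [if_pos rfl, tsub_self, coeff_monomial, if_pos rfl, coeff_monomial, if_pos rfl,
        Dk_self, one_mul, mul_comm]
    · rw [if_neg hne, coeff_monomial]
      by_cases hle : β ≤ α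
      · have : ¬ α ≤ β := fun h => hne (le_antisymm hle h)
        rw [if_pos (tsub_eq_zero_iff_le.2 hle), Dk_eq_zero this]
        push_cast; ring
      · rw [if_neg]
        intro h
        exact hle (tsub_eq_zero_iff_le.1 h)
  rw [Finset.sum_congr rfl key]
  rw [Finset.sum_ite_eq' F.support α (fun _ => ((∏ i, (α i).factorial : ℕ) : k) * coeff α F)]
  by_cases hmem : α ∈ F.support
  · rw [if_pos hmem]
  · rw [if_neg hmem]
    have h0 : coeff α F = 0 := by
      by_contra hh
      exact hmem (mem_support_iff.2 hh)
    rw [h0, mul_zero]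

lemma homogeneousComponent_two_apolB {g F : MvPolynomial (Fin N) k}
    (hg : coeff 0 g = 0) (hF : ∀ β ∈ F.support, (β : Fin N →₀ ℕ).degree ≤ 2) :
    homogeneousComponent 2 (apolB g F) = 0 := by
  rw [apolB_apply, map_sum]
  refine Finset.sum_eq_zero fun α hα => ?_
  rw [map_sum]
  refine Finset.sum_eq_zero fun β hβ => ?_
  by_cases h : α ≤ β
  · have hhom : ((monomial (β - α)) (coeff α g * coeff β F * (Dk α β : k))) ∈
        homogeneousSubmodule (Fin N) k ((β - α).degree) :=
      isHomogeneous_monomial _ rfl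
    rw [homogeneousComponent_of_mem hhom, if_neg]
    have hα0 : α ≠ 0 := fun h0 => (mem_support_iff.1 hα) (h0 ▸ hg)
    have : α.degree ≠ 0 := fun h0 => hα0 ((Finsupp.degree_eq_zero_iff α).1 h0)
    have hβ2 : β.degree ≤ 2 := hF β hβ
    rw [degree_tsub_of_le h]
    omega
  · rw [Dk_eq_zero h]
    push_cast
    rw [mul_zero, monomial_zero, map_zero]

lemma homogeneousComponent_two_apolB' (g F : MvPolynomial (Fin N) k)
    (hF : ∀ β ∈ F.support, (β : Fin N →₀ ℕ).degree ≤ 2) :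
    homogeneousComponent 2 (apolB g F) = coeff 0 g • homogeneousComponent 2 F := by
  have hdecomp : g = C (coeff 0 g) + (g - C (coeff 0 g)) := by ring
  have h0 : coeff 0 (g - C (coeff 0 g)) = 0 := by
    rw [coeff_sub, coeff_C, if_pos rfl, sub_self]
  conv_lhs => rw [hdecomp]
  rw [map_add, LinearMap.add_apply, map_add, apolB_C, map_smul,
    homogeneousComponent_two_apolB h0 hF, add_zero]


/-! ### projIdeal machinery -/

variable {m : ℕ}

/-- substitute `x_j ↦ a_j • T` -/
def psi (a : Fin m → k) : MvPolynomial (Fin m) k →ₐ[k] Polynomial k :=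
  aeval fun j => Polynomial.C (a j) * Polynomial.X

lemma psi_eval (a : Fin m → k) (t : k) (f : MvPolynomial (Fin m) k) :
    Polynomial.eval t (psi a f) = eval (t • a) f := by
  induction f using MvPolynomial.induction_on with
  | C c => simp [psi]
  | add p q hp hq => simp [hp, hq]
  | mul_X p j hp =>
      simp only [psi, map_mul, aeval_X, Polynomial.eval_mul, Polynomial.eval_C,
        Polynomial.eval_X, eval_mul, eval_X, Pi.smul_apply, smul_eq_mul] at *
      rw [hp]; ring

lemma degree_eq_sum_univ (α : Fin m →₀ ℕ) : α.degree = ∑ i, α i := by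
  rw [Finsupp.degree]
  refine Finset.sum_subset (Finset.subset_univ _) fun i _ hi => ?_
  exact Finsupp.notMem_support_iff.1 hi

lemma psi_monomial (a : Fin m → k) (α : Fin m →₀ ℕ) (c : k) :
    psi a (monomial α c) = Polynomial.C (c * ∏ j, a j ^ α j) * Polynomial.X ^ α.degree := by
  rw [psi, aeval_monomial]
  rw [Finsupp.prod_fintype _ _ (fun i => pow_zero _)]
  have : ∀ j : Fin m, (Polynomial.C (a j) * Polynomial.X) ^ α j
      = Polynomial.C (a j ^ α j) * Polynomial.X ^ α j := by
    intro j; rw [mul_pow, Polynomial.C_pow]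
  rw [Finset.prod_congr rfl fun j _ => this j, Finset.prod_mul_distrib, ← map_prod,
    Finset.prod_pow_eq_pow_sum, ← degree_eq_sum_univ]
  rw [show (algebraMap k (Polynomial k)) c = Polynomial.C c from rfl, Polynomial.C_mul]
  ring

lemma coeff_psi (a : Fin m → k) (f : MvPolynomial (Fin m) k) (d : ℕ) :
    (psi a f).coeff d = eval a (homogeneousComponent d f) := by
  induction f using MvPolynomial.induction_on' with
  | add p q hp hq => simp [hp, hq]
  | monomial α c =>
      rw [psi_monomial, Polynomial.coeff_C_mul, Polynomial.coeff_X_pow]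
      have hmem : (monomial α c) ∈ homogeneousSubmodule (Fin m) k α.degree :=
        isHomogeneous_monomial _ rfl
      rw [homogeneousComponent_of_mem hmem]
      by_cases h : d = α.degree
      · rw [if_pos h, if_pos h, eval_monomial,
          Finsupp.prod_fintype _ _ (fun i => pow_zero _), mul_one]
      · rw [if_neg h, if_neg h, map_zero, mul_zero]

variable [CharZero k]

lemma mem_projIdeal_iff {r : ℕ} (x : Fin r → Fin m → k) (f : MvPolynomial (Fin m) k) :
    f ∈ projIdeal x ↔ ∀ i, psi (x i) f = 0 := by
  rw [projIdeal]
  rw [Ideal.mem_iInf]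
  refine forall_congr' fun i => ?_
  rw [Ideal.mem_iInf]
  constructor
  · intro h
    refine Polynomial.zero_of_eval_zero _ fun t => ?_
    rw [psi_eval]
    exact h t
  · intro h t
    rw [RingHom.mem_ker, ← psi_eval, h, Polynomial.eval_zero]

lemma homogeneousComponent_mem_projIdeal {r : ℕ} {x : Fin r → Fin m → k}
    {f : MvPolynomial (Fin m) k} (hf : f ∈ projIdeal x) (d : ℕ) :
    homogeneousComponent d f ∈ projIdeal x := by
  rw [mem_projIdeal_iff] at hf ⊢
  intro i
  refine Polynomial.ext fun e => ?_
  rw [coeff_psi, Polynomial.coeff_zero]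
  by_cases h : e = d
  · subst h
    have h1 : homogeneousComponent e (homogeneousComponent e f) = homogeneousComponent e f := by
      rw [homogeneousComponent_of_mem (homogeneousComponent_mem e f), if_pos rfl]
    rw [h1, ← coeff_psi, hf, Polynomial.coeff_zero]
  · rw [homogeneousComponent_of_mem (homogeneousComponent_mem d f), if_neg h, map_zero]

lemma mem_projIdeal_of_homog {r d : ℕ} {x : Fin r → Fin m → k}
    {f : MvPolynomial (Fin m) k} (hf : f.IsHomogeneous d)
    (h : ∀ i, eval (x i) f = 0) : f ∈ projIdeal x := by
  rw [mem_projIdeal_iff]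
  intro i
  refine Polynomial.ext fun e => ?_
  rw [coeff_psi, Polynomial.coeff_zero]
  rw [homogeneousComponent_of_mem ((mem_homogeneousSubmodule _ _).2 hf)]
  by_cases he : e = d
  · rw [if_pos he, h i]
  · rw [if_neg he, map_zero]

lemma eval_of_mem_projIdeal {r : ℕ} {x : Fin r → Fin m → k}
    {f : MvPolynomial (Fin m) k} (hf : f ∈ projIdeal x) (i : Fin r) :
    eval (x i) f = 0 := by
  rw [mem_projIdeal_iff] at hf
  have := psi_eval (x i) 1 f
  rw [hf i, Polynomial.eval_zero, one_smul] at this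
  exact this.symm

lemma coeff_zero_of_mem_projIdeal {r : ℕ} {x : Fin r → Fin m → k}
    {f : MvPolynomial (Fin m) k} (hf : f ∈ projIdeal x) (i : Fin r) :
    coeff 0 f = 0 := by
  have h := homogeneousComponent_mem_projIdeal hf 0
  rw [homogeneousComponent_zero] at h
  have := eval_of_mem_projIdeal h i
  rwa [eval_C] at this

lemma eval_dualLin (a b' : Fin m → k) : eval a (dualLin b') = ∑ j, b' j * a j := by
  simp [dualLin]

lemma dualLin_isHomogeneous (b' : Fin m → k) : (dualLin b').IsHomogeneous 1 := by
  refine IsHomogeneous.sum _ _ _ fun j _ => ?_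
  exact isHomogeneous_C_mul_X _ _

lemma psi_dualLin (a b' : Fin m → k) :
    psi a (dualLin b') = Polynomial.C (∑ j, b' j * a j) * Polynomial.X := by
  rw [dualLin, map_sum, map_sum, Finset.sum_mul]
  refine Finset.sum_congr rfl fun j _ => ?_
  rw [map_mul, psi]
  simp [mul_assoc]

lemma projIdeal_nzd {r : ℕ} {x : Fin r → Fin m → k} {b' : Fin m → k}
    (hb' : ∀ i, (∑ j, b' j * x i j) ≠ 0) {f : MvPolynomial (Fin m) k}
    (hzf : dualLin b' * f ∈ projIdeal x) : f ∈ projIdeal x := by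
  rw [mem_projIdeal_iff] at hzf ⊢
  intro i
  have h := hzf i
  rw [map_mul, psi_dualLin] at h
  have hC : (Polynomial.C (∑ j, b' j * x i j) * Polynomial.X : Polynomial k) ≠ 0 := by
    intro hh
    have h2 := hb' i
    apply h2
    have := congrArg (Polynomial.coeff · 1) hh
    simpa using this
  exact (mul_eq_zero.1 h).resolve_left hC


/-! ### dimension machinery -/

instance instFDhomog (d : ℕ) : FiniteDimensional k ↥(homogeneousSubmodule (Fin m) k d) := by
  rw [homogeneousSubmodule_eq_finsupp_supported]
  have hfin : {α : Fin m →₀ ℕ | α.degree = d}.Finite :=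
    (Finsupp.finite_of_degree_le d).subset (fun α hα => le_of_eq hα)
  haveI := hfin.to_subtype
  exact Module.Finite.of_basis (basisRestrictSupport k _)

lemma degree_single_one (j : Fin m) : (Finsupp.single j 1 : Fin m →₀ ℕ).degree = 1 := by
  rw [Finsupp.degree_single]

lemma finrank_HS_one : Module.finrank k ↥(homogeneousSubmodule (Fin m) k 1) = m := by
  rw [homogeneousSubmodule_eq_finsupp_supported]
  have hbij : Function.Bijective
      (fun j : Fin m => (⟨Finsupp.single j 1, degree_single_one j⟩ :
        {α : Fin m →₀ ℕ // α.degree = 1})) := by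
    constructor
    · intro i j hij
      have := congrArg Subtype.val hij
      exact Finsupp.single_left_injective one_ne_zero this
    · rintro ⟨α, hα⟩
      obtain ⟨j, rfl⟩ := degree_one_eq_single hα
      exact ⟨j, rfl⟩
  let e : Fin m ≃ {α : Fin m →₀ ℕ // α.degree = 1} := Equiv.ofBijective _ hbij
  haveI : Fintype {α : Fin m →₀ ℕ // α.degree = 1} := Fintype.ofEquiv _ e
  have hfr : Module.finrank k ↥(restrictSupport k {α : Fin m →₀ ℕ | α.degree = 1})
      = Fintype.card {α : Fin m →₀ ℕ // α.degree = 1} :=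
    Module.finrank_eq_card_basis (basisRestrictSupport k _)
  have hcard : Fintype.card {α : Fin m →₀ ℕ // α.degree = 1} = m := by
    rw [← Fintype.card_congr e, Fintype.card_fin]
  exact hfr.trans hcard

/-- evaluation as a linear map -/
def evalLin (a : Fin m → k) : MvPolynomial (Fin m) k →ₗ[k] k where
  toFun := eval a
  map_add' f g := by simp
  map_smul' c f := by simp [smul_eq_C_mul]

variable [CharZero k]

lemma HF_le_card {r : ℕ} (x : Fin r → Fin m → k) (t : ℕ) : HF (projIdeal x) t ≤ r := by
  classical
  set V := homogeneousSubmodule (Fin m) k t with hV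
  let E : ↥V →ₗ[k] (Fin r → k) := LinearMap.pi fun i => (evalLin (x i)).comp V.subtype
  have hker : Submodule.map V.subtype (LinearMap.ker E) ≤
      Submodule.restrictScalars k (projIdeal x) ⊓ V := by
    rintro g ⟨⟨f, hfV⟩, hfker, rfl⟩
    refine ⟨?_, hfV⟩
    have hhom : f.IsHomogeneous t := hfV
    refine mem_projIdeal_of_homog hhom fun i => ?_
    have := congrFun hfker i
    exact this
  have h1 : Module.finrank k ↥(LinearMap.ker E) ≤
      Module.finrank k ↥(Submodule.restrictScalars k (projIdeal x) ⊓ V) := by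
    have heq : Module.finrank k ↥(Submodule.map V.subtype (LinearMap.ker E))
        = Module.finrank k ↥(LinearMap.ker E) :=
      (Submodule.equivMapOfInjective V.subtype (Submodule.injective_subtype V) _).symm.finrank_eq
    rw [← heq]
    exact Submodule.finrank_mono hker
  have h2 : Module.finrank k ↥(LinearMap.range E) ≤ r := by
    have := Submodule.finrank_le (LinearMap.range E)
    rwa [Module.finrank_pi, Fintype.card_fin] at this
  have h3 := LinearMap.finrank_range_add_finrank_ker E
  rw [HF, ← hV]
  omega

section NZD

variable {r : ℕ} (x : Fin r → Fin m → k) (b' : Fin m → k)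

/-- multiplication by the linear form -/
def mulL (b' : Fin m → k) : MvPolynomial (Fin m) k →ₗ[k] MvPolynomial (Fin m) k :=
  LinearMap.mulLeft k (dualLin b')

variable (hb' : ∀ i, (∑ j, b' j * x i j) ≠ 0)

include hb'

lemma dualLin_ne_zero (i0 : Fin r) : dualLin b' ≠ 0 := by
  intro h
  apply hb' i0
  have := eval_dualLin (x i0) b'
  rw [h] at this
  simpa using this.symm

lemma mulL_inj (i0 : Fin r) : Function.Injective (mulL (k := k) b') := by
  have : dualLin b' ≠ 0 := dualLin_ne_zero x b' hb' i0
  intro f g hfg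
  exact mul_left_cancel₀ this hfg

omit hb'

lemma map_mulL_homog_le (d : ℕ) :
    Submodule.map (mulL (k := k) b') (homogeneousSubmodule (Fin m) k d)
      ≤ homogeneousSubmodule (Fin m) k (d + 1) := by
  rintro g ⟨f, hf, rfl⟩
  have : (dualLin b' * f).IsHomogeneous (1 + d) := (dualLin_isHomogeneous b').mul hf
  rw [add_comm] at this
  exact this

include hb'

lemma map_mulL_It (d : ℕ) :
    Submodule.map (mulL (k := k) b')
        (Submodule.restrictScalars k (projIdeal x) ⊓ homogeneousSubmodule (Fin m) k d)
      = (Submodule.restrictScalars k (projIdeal x) ⊓ homogeneousSubmodule (Fin m) k (d+1))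
          ⊓ Submodule.map (mulL (k := k) b') (homogeneousSubmodule (Fin m) k d) := by
  apply le_antisymm
  · rintro g ⟨f, ⟨hfI, hfV⟩, rfl⟩
    refine ⟨⟨?_, ?_⟩, ⟨f, hfV, rfl⟩⟩
    · exact Ideal.mul_mem_left _ _ hfI
    · exact map_mulL_homog_le b' d ⟨f, hfV, rfl⟩
  · rintro g ⟨⟨hgI, hgV⟩, ⟨f, hfV, rfl⟩⟩
    exact ⟨f, ⟨projIdeal_nzd hb' hgI, hfV⟩, rfl⟩

lemma key_count (i0 : Fin r) (d : ℕ) :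
    Module.finrank k ↥((Submodule.restrictScalars k (projIdeal x)
          ⊓ homogeneousSubmodule (Fin m) k (d+1))
        ⊔ Submodule.map (mulL (k := k) b') (homogeneousSubmodule (Fin m) k d))
      + Module.finrank k ↥(Submodule.restrictScalars k (projIdeal x)
          ⊓ homogeneousSubmodule (Fin m) k d)
    = Module.finrank k ↥(Submodule.restrictScalars k (projIdeal x)
          ⊓ homogeneousSubmodule (Fin m) k (d+1))
      + Module.finrank k ↥(homogeneousSubmodule (Fin m) k d) := by
  classical
  set A := Submodule.restrictScalars k (projIdeal x) ⊓ homogeneousSubmodule (Fin m) k (d+1)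
    with hA
  set B := Submodule.map (mulL (k := k) b') (homogeneousSubmodule (Fin m) k d) with hB
  haveI : FiniteDimensional k ↥A :=
    Submodule.finiteDimensional_of_le (V := MvPolynomial (Fin m) k) (inf_le_right)
  haveI : FiniteDimensional k ↥B :=
    Submodule.finiteDimensional_of_le (map_mulL_homog_le b' d)
  have hsum := Submodule.finrank_sup_add_finrank_inf_eq A B
  have hinf : A ⊓ B = Submodule.map (mulL (k := k) b')
      (Submodule.restrictScalars k (projIdeal x) ⊓ homogeneousSubmodule (Fin m) k d) :=
    (map_mulL_It x b' hb' d).symm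
  have hBrank : Module.finrank k ↥B
      = Module.finrank k ↥(homogeneousSubmodule (Fin m) k d) :=
    ((Submodule.equivMapOfInjective _ (mulL_inj x b' hb' i0) _).symm.finrank_eq)
  have hIrank : Module.finrank k ↥(A ⊓ B)
      = Module.finrank k ↥(Submodule.restrictScalars k (projIdeal x)
          ⊓ homogeneousSubmodule (Fin m) k d) := by
    rw [hinf]
    exact ((Submodule.equivMapOfInjective _ (mulL_inj x b' hb' i0) _).symm.finrank_eq)
  omega

end NZD

/-! ### small helpers -/

lemma eq_C_coeff_zero {p : MvPolynomial (Fin m) k} (hp : p.IsHomogeneous 0) :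
    p = C (coeff 0 p) := by
  have h1 : homogeneousComponent 0 p = p := by
    rw [homogeneousComponent_of_mem ((mem_homogeneousSubmodule _ _).2 hp), if_pos rfl]
  nth_rewrite 1 [← h1]
  rw [homogeneousComponent_zero]

lemma homog1_zero {p : MvPolynomial (Fin m) k} (hp : p.IsHomogeneous 1)
    (h : ∀ j, coeff (Finsupp.single j 1) p = 0) : p = 0 := by
  ext β
  rw [coeff_zero]
  by_contra hc
  have hd : β.degree = 1 := by
    by_contra hne
    exact hc (hp.coeff_eq_zero hne)
  obtain ⟨j, rfl⟩ := degree_one_eq_single hd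
  exact hc (h j)

lemma prod_factorial_single (j : Fin m) :
    (∏ i, ((Finsupp.single j 1 : Fin m →₀ ℕ) i).factorial) = 1 := by
  refine Finset.prod_eq_one fun i _ => ?_
  rcases eq_or_ne i j with rfl | hij
  · simp
  · rw [Finsupp.single_eq_of_ne' (Ne.symm hij)]
    rfl

lemma finrank_span_singleton_le (v : MvPolynomial (Fin m) k) :
    Module.finrank k ↥(Submodule.span k {v}) ≤ 1 := by
  rcases eq_or_ne v 0 with rfl | hv
  · rw [Submodule.span_singleton_eq_bot.2 rfl, finrank_bot]
    omega
  · rw [finrank_span_singleton hv]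

lemma Rspan_comp2 {F : MvPolynomial (Fin m) k}
    (hF2 : ∀ β ∈ F.support, (β : Fin m →₀ ℕ).degree ≤ 2) :
    ∀ G ∈ (Rspan {F} : Submodule k (MvPolynomial (Fin m) k)),
      homogeneousComponent 2 G ∈ Submodule.span k {homogeneousComponent 2 F} := by
  intro G hG
  have hle : (Rspan {F} : Submodule k (MvPolynomial (Fin m) k)) ≤
      Submodule.comap (homogeneousComponent 2)
        (Submodule.span k {homogeneousComponent 2 F}) := by
    rw [Rspan]
    refine Submodule.span_le.2 ?_
    rintro G' ⟨g, F', hF', rfl⟩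
    rcases hF' with rfl
    simp only [SetLike.mem_coe]
    rw [Submodule.mem_comap, apol_eq_apolB, homogeneousComponent_two_apolB' g F' hF2]
    exact Submodule.smul_mem _ _ (Submodule.mem_span_singleton_self _)
  exact hle hG

end Stmt14Aux

open Stmt14Aux in
set_option maxHeartbeats 1000000 in
/-- for `2n+1` generic points `Y` in `P^n` (`n > 3`), with `I(Y)` generated
by quadrics and `HF_Y(2) = 2n+1`, no point `P` makes `X = Y ∪ {P}` arithmetically
Gorenstein. -/
theorem stmt14 [CharZero k] [IsAlgClosed k] (n : ℕ) (hn : 3 < n)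
    (b : Fin (2 * n + 1) → Fin (n + 1) → k) (hb : ProjDistinct b)
    (hHF0 : HF (projIdeal b) 0 = 1) (hHF1 : HF (projIdeal b) 1 = n + 1)
    (hHF2 : ∀ t, 2 ≤ t → HF (projIdeal b) t = 2 * n + 1)
    (hquad : projIdeal b = Ideal.span
      {g : MvPolynomial (Fin (n + 1)) k | g ∈ projIdeal b ∧ g.IsHomogeneous 2})
    (P : Fin (n + 1) → k)
    (hX : ProjDistinct (Fin.snoc b P : Fin (2 * n + 1 + 1) → Fin (n + 1) → k))
    (hstrict : projIdeal (Fin.snoc b P : Fin (2 * n + 1 + 1) → Fin (n + 1) → k)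
      < projIdeal b) :
    ¬ IsArithGor (Fin.snoc b P : Fin (2 * n + 1 + 1) → Fin (n + 1) → k) := by
  classical
  rintro ⟨b', hb', F, hperp⟩
  set x : Fin (2 * n + 1 + 1) → Fin (n + 1) → k := Fin.snoc b P with hx
  set z : MvPolynomial (Fin (n + 1)) k := dualLin b' with hz
  have hIXY : projIdeal x ≤ projIdeal b := hstrict.le
  have i0 : Fin (2 * n + 1 + 1) := ⟨0, by omega⟩
  -- Step A : degree 1 pieces vanish
  have hItY1 : (Submodule.restrictScalars k (projIdeal b)
      ⊓ homogeneousSubmodule (Fin (n + 1)) k 1) = ⊥ := by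
    have h1 := hHF1
    rw [HF] at h1
    have hr1 : Module.finrank k ↥(homogeneousSubmodule (Fin (n + 1)) k 1) = n + 1 :=
      finrank_HS_one
    have hle : Module.finrank k ↥(Submodule.restrictScalars k (projIdeal b)
        ⊓ homogeneousSubmodule (Fin (n + 1)) k 1)
        ≤ Module.finrank k ↥(homogeneousSubmodule (Fin (n + 1)) k 1) :=
      Submodule.finrank_mono inf_le_right
    have h0 : Module.finrank k ↥(Submodule.restrictScalars k (projIdeal b)
        ⊓ homogeneousSubmodule (Fin (n + 1)) k 1) = 0 := by omega
    exact Submodule.finrank_eq_zero.1 h0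
  have hItX1 : (Submodule.restrictScalars k (projIdeal x)
      ⊓ homogeneousSubmodule (Fin (n + 1)) k 1) = ⊥ := by
    refine le_bot_iff.1 ?_
    rw [← hItY1]
    intro g hg
    exact ⟨hIXY hg.1, hg.2⟩
  -- Step B : the two cases
  by_cases hcase : (Submodule.restrictScalars k (projIdeal x)
      ⊓ homogeneousSubmodule (Fin (n + 1)) k 2)
    = (Submodule.restrictScalars k (projIdeal b)
      ⊓ homogeneousSubmodule (Fin (n + 1)) k 2)
  · -- I(Y) ⊆ I(X), contradiction with strictness
    apply hstrict.not_ge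
    rw [hquad]
    refine Ideal.span_le.2 ?_
    rintro g ⟨hgI, hghom⟩
    have hmem : g ∈ (Submodule.restrictScalars k (projIdeal b)
        ⊓ homogeneousSubmodule (Fin (n + 1)) k 2) := ⟨hgI, hghom⟩
    rw [← hcase] at hmem
    exact hmem.1
  · -- main case
    have hlt : (Submodule.restrictScalars k (projIdeal x)
        ⊓ homogeneousSubmodule (Fin (n + 1)) k 2)
      < (Submodule.restrictScalars k (projIdeal b)
        ⊓ homogeneousSubmodule (Fin (n + 1)) k 2) :=
      lt_of_le_of_ne (fun g hg => ⟨hIXY hg.1, hg.2⟩) hcase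
    have hdlt := Submodule.finrank_lt_finrank_of_lt hlt
    have hdY2le : Module.finrank k ↥(Submodule.restrictScalars k (projIdeal b)
        ⊓ homogeneousSubmodule (Fin (n + 1)) k 2)
        ≤ Module.finrank k ↥(homogeneousSubmodule (Fin (n + 1)) k 2) :=
      Submodule.finrank_mono inf_le_right
    have h4 := hHF2 2 le_rfl
    rw [HF] at h4
    have h5 := HF_le_card x 2
    rw [HF] at h5
    have hr2 : Module.finrank k ↥(homogeneousSubmodule (Fin (n + 1)) k 2)
        = Module.finrank k ↥(Submodule.restrictScalars k (projIdeal x)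
            ⊓ homogeneousSubmodule (Fin (n + 1)) k 2) + (2 * n + 2) := by omega
    -- Hilbert function is constant equal to 2n+2 from degree 2 on
    have hconst : ∀ t, 2 ≤ t →
        Module.finrank k ↥(homogeneousSubmodule (Fin (n + 1)) k t)
          = Module.finrank k ↥(Submodule.restrictScalars k (projIdeal x)
              ⊓ homogeneousSubmodule (Fin (n + 1)) k t) + (2 * n + 2) := by
      intro t ht
      induction t, ht using Nat.le_induction with
      | base => exact hr2
      | succ t ht ih =>
          have hkc := key_count x b' hb' i0 t
          have hub := HF_le_card x (t + 1)
          rw [HF] at hub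
          have hle1 : Module.finrank k ↥(Submodule.restrictScalars k (projIdeal x)
              ⊓ homogeneousSubmodule (Fin (n + 1)) k (t+1))
              ≤ Module.finrank k ↥(homogeneousSubmodule (Fin (n + 1)) k (t+1)) :=
            Submodule.finrank_mono inf_le_right
          have hle2 : Module.finrank k ↥((Submodule.restrictScalars k (projIdeal x)
                ⊓ homogeneousSubmodule (Fin (n + 1)) k (t+1))
              ⊔ Submodule.map (mulL (k := k) b') (homogeneousSubmodule (Fin (n + 1)) k t))
              ≤ Module.finrank k ↥(homogeneousSubmodule (Fin (n + 1)) k (t+1)) :=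
            Submodule.finrank_mono (sup_le inf_le_right (map_mulL_homog_le b' t))
          omega
    have hfull : ∀ t, 2 ≤ t →
        ((Submodule.restrictScalars k (projIdeal x)
            ⊓ homogeneousSubmodule (Fin (n + 1)) k (t+1))
          ⊔ Submodule.map (mulL (k := k) b') (homogeneousSubmodule (Fin (n + 1)) k t))
        = homogeneousSubmodule (Fin (n + 1)) k (t+1) := by
      intro t ht
      have hkc := key_count x b' hb' i0 t
      have h1 := hconst t ht
      have h2 := hconst (t + 1) (by omega)
      have hle1 : Module.finrank k ↥(Submodule.restrictScalars k (projIdeal x)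
          ⊓ homogeneousSubmodule (Fin (n + 1)) k t)
          ≤ Module.finrank k ↥(homogeneousSubmodule (Fin (n + 1)) k t) :=
        Submodule.finrank_mono inf_le_right
      haveI : FiniteDimensional k ↥(homogeneousSubmodule (Fin (n + 1)) k (t+1)) :=
        instFDhomog (t+1)
      refine Submodule.eq_of_le_of_finrank_le
        (sup_le inf_le_right (map_mulL_homog_le b' t)) ?_
      omega
    -- the sup is contained in the ideal J = I(X) + (z)
    have hsupJ : ∀ t : ℕ,
        ∀ g ∈ ((Submodule.restrictScalars k (projIdeal x)
            ⊓ homogeneousSubmodule (Fin (n + 1)) k (t+1))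
          ⊔ Submodule.map (mulL (k := k) b') (homogeneousSubmodule (Fin (n + 1)) k t)),
        g ∈ (projIdeal x ⊔ Ideal.span {z} : Ideal (MvPolynomial (Fin (n + 1)) k)) := by
      intro t g hg
      refine (sup_le (fun h hh => ?_) (fun h hh => ?_) : _ ≤
        Submodule.restrictScalars k (projIdeal x ⊔ Ideal.span {z})) hg
      · exact Ideal.mem_sup_left hh.1
      · obtain ⟨f, hf, rfl⟩ := hh
        refine Ideal.mem_sup_right ?_
        exact Ideal.mul_mem_right f _ (Ideal.mem_span_singleton_self z)
    -- F belongs to the inverse system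
    have hFmem : F ∈ ((Rspan {F} : Submodule k (MvPolynomial (Fin (n + 1)) k)) :
        Set (MvPolynomial (Fin (n + 1)) k)) := by
      refine SetLike.mem_coe.2 (Submodule.subset_span ⟨1, F, rfl, ?_⟩)
      rw [apol_eq_apolB, apolB_one]
    rw [← hperp] at hFmem
    -- support of F is concentrated in degrees ≤ 2
    have hFsupp : ∀ β ∈ F.support, (β : Fin (n + 1) →₀ ℕ).degree ≤ 2 := by
      intro β hβ
      by_contra hdeg
      push_neg at hdeg
      have h3 : β.degree - 1 + 1 = β.degree := by omega
      have hfl := hfull (β.degree - 1) (by omega)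
      have hmem : monomial β (1:k) ∈ homogeneousSubmodule (Fin (n + 1)) k (β.degree - 1 + 1) := by
        rw [h3]
        exact isHomogeneous_monomial _ rfl
      rw [← hfl] at hmem
      have hmonJ := hsupJ _ _ hmem
      have h0 := hFmem _ (SetLike.mem_coe.2 hmonJ)
      rw [apol_eq_apolB] at h0
      have hc := coeff_zero_apolB_monomial β F
      rw [h0, coeff_zero] at hc
      have hfac : ((∏ i, (β i).factorial : ℕ) : k) ≠ 0 := by
        rw [Nat.cast_ne_zero]
        exact Finset.prod_ne_zero_iff.2 fun i _ => (Nat.factorial_pos _).ne'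
      have : coeff β F = 0 := by
        rcases mul_eq_zero.1 hc.symm with h | h
        · exact absurd h hfac
        · exact h
      exact (mem_support_iff.1 hβ) this
    -- Step D : the cyclic inverse system gives a contradiction in degree 2
    have hJ2le : ((Submodule.restrictScalars k (projIdeal x)
          ⊓ homogeneousSubmodule (Fin (n + 1)) k 2)
        ⊔ Submodule.map (mulL (k := k) b') (homogeneousSubmodule (Fin (n + 1)) k 1))
        ≤ homogeneousSubmodule (Fin (n + 1)) k 2 := by
      have h1 := map_mulL_homog_le (k := k) (m := n + 1) b' 1
      norm_num at h1
      exact sup_le inf_le_right h1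
    have hkc1' := key_count x b' hb' i0 1
    rw [hItX1, finrank_bot, finrank_HS_one] at hkc1'
    have hkc1 : Module.finrank k ↥((Submodule.restrictScalars k (projIdeal x)
          ⊓ homogeneousSubmodule (Fin (n + 1)) k 2)
        ⊔ Submodule.map (mulL (k := k) b') (homogeneousSubmodule (Fin (n + 1)) k 1)) + 0
        = Module.finrank k ↥(Submodule.restrictScalars k (projIdeal x)
          ⊓ homogeneousSubmodule (Fin (n + 1)) k 2) + (n + 1) := hkc1'
    clear hkc1'
    -- the pairing with the degree 2 part of J
    set J2 : Submodule k (MvPolynomial (Fin (n + 1)) k) :=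
      (Submodule.restrictScalars k (projIdeal x)
          ⊓ homogeneousSubmodule (Fin (n + 1)) k 2)
        ⊔ Submodule.map (mulL (k := k) b') (homogeneousSubmodule (Fin (n + 1)) k 1)
      with hJ2
    haveI : FiniteDimensional k ↥J2 := Submodule.finiteDimensional_of_le hJ2le
    set Bp : MvPolynomial (Fin (n + 1)) k →ₗ[k] MvPolynomial (Fin (n + 1)) k →ₗ[k] k :=
      LinearMap.compr₂ apolB (lcoeff k 0) with hBp
    set Φ : ↥(homogeneousSubmodule (Fin (n + 1)) k 2) →ₗ[k] (↥J2 →ₗ[k] k) :=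
      (LinearMap.domRestrict₁₂ Bp J2 (homogeneousSubmodule (Fin (n + 1)) k 2)).flip with hPhi
    have hker := LinearMap.finrank_range_add_finrank_ker Φ
    have hrange : Module.finrank k ↥(LinearMap.range Φ) ≤ Module.finrank k ↥J2 := by
      have h1 := Submodule.finrank_le (LinearMap.range Φ)
      have h2 : Module.finrank k (↥J2 →ₗ[k] k) = Module.finrank k ↥J2 :=
        Subspace.dual_finrank_eq
      omega
    -- kernel elements lie in the inverse system
    have hWperp : ∀ G : ↥(homogeneousSubmodule (Fin (n + 1)) k 2), G ∈ LinearMap.ker Φ →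
        (G : MvPolynomial (Fin (n + 1)) k) ∈
          perp ((projIdeal x ⊔ Ideal.span {z} : Ideal (MvPolynomial (Fin (n + 1)) k)) :
            Set (MvPolynomial (Fin (n + 1)) k)) := by
      intro G hG
      have hGhom : (G : MvPolynomial (Fin (n + 1)) k).IsHomogeneous 2 := G.2
      have hann : ∀ h, h ∈ J2 → apolB h (G : MvPolynomial (Fin (n + 1)) k) = 0 := by
        intro h hh
        have h0 : coeff 0 (apolB h (G : MvPolynomial (Fin (n + 1)) k)) = 0 := by
          have h1 := LinearMap.congr_fun (LinearMap.mem_ker.1 hG) (⟨h, hh⟩ : ↥J2)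
          simpa [hPhi, hBp, LinearMap.domRestrict₁₂_apply] using h1
        have hhom : (apolB h (G : MvPolynomial (Fin (n + 1)) k)).IsHomogeneous 0 := by
          have h2 : h.IsHomogeneous 2 := hJ2le hh
          have h3 := apolB_isHomogeneous h2 hGhom
          norm_num at h3
          exact h3
        rw [eq_C_coeff_zero hhom, h0, map_zero]
      have hzG : apolB z (G : MvPolynomial (Fin (n + 1)) k) = 0 := by
        have hhom1 : (apolB z (G : MvPolynomial (Fin (n + 1)) k)).IsHomogeneous 1 := by
          have h3 := apolB_isHomogeneous (dualLin_isHomogeneous b') hGhom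
          norm_num at h3
          exact h3
        refine homog1_zero hhom1 fun j => ?_
        have hXjz : z * X j ∈ J2 := by
          refine Submodule.mem_sup_right ⟨X j, isHomogeneous_X _ _, rfl⟩
        have h1 := hann _ hXjz
        rw [mul_comm, apolB_mul] at h1
        have hc := coeff_zero_apolB_monomial (Finsupp.single j 1)
          (apolB z (G : MvPolynomial (Fin (n + 1)) k))
        rw [show (monomial (Finsupp.single j 1) (1:k)) = X j from rfl, h1, coeff_zero,
          prod_factorial_single] at hc
        simpa using hc.symm
      intro g hg
      rw [SetLike.mem_coe] at hg
      obtain ⟨p, hp, q, hq, rfl⟩ := Submodule.mem_sup.1 hg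
      rw [apol_eq_apolB, map_add, LinearMap.add_apply]
      have hpz : apolB p (G : MvPolynomial (Fin (n + 1)) k) = 0 := by
        conv_lhs => rw [← sum_homogeneousComponent p]
        rw [map_sum, LinearMap.sum_apply]
        refine Finset.sum_eq_zero fun d hd => ?_
        match d with
        | 0 =>
            rw [homogeneousComponent_zero, coeff_zero_of_mem_projIdeal hp i0, map_zero,
              map_zero, LinearMap.zero_apply]
        | 1 =>
            have hmem : homogeneousComponent 1 p ∈
                (Submodule.restrictScalars k (projIdeal x)
                  ⊓ homogeneousSubmodule (Fin (n + 1)) k 1) :=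
              ⟨homogeneousComponent_mem_projIdeal hp 1, homogeneousComponent_mem 1 p⟩
            rw [hItX1] at hmem
            rw [(Submodule.mem_bot k).1 hmem, map_zero, LinearMap.zero_apply]
        | 2 =>
            exact hann _ (Submodule.mem_sup_left
              ⟨homogeneousComponent_mem_projIdeal hp 2, homogeneousComponent_mem 2 p⟩)
        | (e+3) =>
            exact apolB_eq_zero_of_lt (homogeneousComponent_isHomogeneous (e+3) p)
              hGhom (by omega)
      have hqz : apolB q (G : MvPolynomial (Fin (n + 1)) k) = 0 := by
        obtain ⟨h, rfl⟩ := Ideal.mem_span_singleton'.1 hq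
        rw [apolB_mul, hzG, map_zero]
      rw [hpz, hqz, add_zero]
    -- conclude
    have hW : Submodule.map (homogeneousSubmodule (Fin (n + 1)) k 2).subtype
        (LinearMap.ker Φ) ≤ Submodule.span k {homogeneousComponent 2 F} := by
      rintro G' ⟨G, hGk, rfl⟩
      have hperpG := hWperp G hGk
      rw [hperp] at hperpG
      have h2 := Rspan_comp2 hFsupp _ (SetLike.mem_coe.1 hperpG)
      have hG2 : homogeneousComponent 2 (G : MvPolynomial (Fin (n + 1)) k)
          = (G : MvPolynomial (Fin (n + 1)) k) := by
        rw [homogeneousComponent_of_mem G.2, if_pos rfl]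
      show (G : MvPolynomial (Fin (n + 1)) k) ∈ _
      rwa [hG2] at h2
    have hWrank : Module.finrank k
        ↥(Submodule.map (homogeneousSubmodule (Fin (n + 1)) k 2).subtype (LinearMap.ker Φ))
        = Module.finrank k ↥(LinearMap.ker Φ) :=
      (Submodule.equivMapOfInjective _ (Submodule.injective_subtype _) _).symm.finrank_eq
    have hWle1 : Module.finrank k
        ↥(Submodule.map (homogeneousSubmodule (Fin (n + 1)) k 2).subtype (LinearMap.ker Φ))
        ≤ 1 :=
      le_trans (Submodule.finrank_mono hW) (finrank_span_singleton_le _)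
    omega


end
end
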